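/- arXiv:1401.7850 — 5 statements merged into one kernel-verified Lean document; each statement's English description precedes it below -/
import Mathlib

section
/- (1) For all integers 1 ≤ i ≤ n−1 one has σ·c_H·(n−1)^{H−1/2}·I_n(i) ≤ j_n^H(i) ≤ σ·c_H·n^{H−1/2}·I_n(i), where I_n(i) = ∫_{i−1}^i x^{1/2−H} φ_n^H(x) dx and φ_n^H(x) = (n−x)^{H−1/2} − (n−1−x)^{H−1/2}. (2) For all integers n > 1 one has g_H ≤ g_n^H ≤ g_H·(1 + 1/(n−1))^{H−1/2}. -/
open MeasureTheory Filter Set ProbabilityTheory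

noncomputable section

/-- The normalizing constant `c_H`. -/
def cH (H : ℝ) : ℝ :=
  Real.sqrt (2 * H * Real.Gamma (3 / 2 - H) / (Real.Gamma (H + 1 / 2) * Real.Gamma (2 - 2 * H)))

/-- The constant `C_H = c_H (H - 1/2)`. -/
def CH (H : ℝ) : ℝ := cH H * (H - 1 / 2)

/-- The kernel `k_H(t,s)`. -/
def kerH (H t s : ℝ) : ℝ :=
  CH H * s ^ (1 / 2 - H) * ∫ u in s..t, u ^ (H - 1 / 2) * (u - s) ^ (H - 3 / 2)

/-- The coefficient `J_n^{(N,H)}(i)` (with volatility `σ`). -/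
def JN (σ H : ℝ) (N n i : ℕ) : ℝ :=
  σ * Real.sqrt N * ∫ u in (((i : ℝ) - 1) / N)..((i : ℝ) / N),
    (kerH H ((n : ℝ) / N) u - kerH H (((n : ℝ) - 1) / N) u)

/-- The coefficient `g_n^{(N,H)}` (with volatility `σ`). -/
def gNH (σ H : ℝ) (N n : ℕ) : ℝ :=
  σ * Real.sqrt N * ∫ u in (((n : ℝ) - 1) / N)..((n : ℝ) / N), kerH H ((n : ℝ) / N) u

/-- The rescaled coefficient `j_n^H(i)`. -/
def jH (σ H : ℝ) (n i : ℕ) : ℝ :=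
  σ * CH H * ∫ x in ((i : ℝ) - 1)..(i : ℝ),
    x ^ (1 / 2 - H) *
      ∫ v in (0 : ℝ)..1, (v + n - 1) ^ (H - 1 / 2) * (v + n - 1 - x) ^ (H - 3 / 2)

/-- The rescaled coefficient `g_n^H`. -/
def gnH (σ H : ℝ) (n : ℕ) : ℝ :=
  σ * CH H * ∫ x in ((n : ℝ) - 1)..(n : ℝ),
    x ^ (1 / 2 - H) * ((n : ℝ) - x) ^ (H - 1 / 2) *
      ∫ y in (0 : ℝ)..1, (y * ((n : ℝ) - x) + x) ^ (H - 1 / 2) * y ^ (H - 3 / 2)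

/-- The constant `g_H = σ c_H / (H + 1/2)`. -/
def gH (σ H : ℝ) : ℝ := σ * cH H / (H + 1 / 2)

/-- The autocovariance `ρ_h(k)` of fBm with Hurst parameter `h`. -/
def rho (h : ℝ) (k : ℕ) : ℝ :=
  (((k : ℝ) + 1) ^ (2 * h) + ((k : ℝ) - 1) ^ (2 * h) - 2 * (k : ℝ) ^ (2 * h)) / 2

/-- The function `φ_n^H(x) = (n-x)^{H-1/2} - (n-1-x)^{H-1/2}`. -/
def phiH (H : ℝ) (n : ℕ) (x : ℝ) : ℝ :=
  ((n : ℝ) - x) ^ (H - 1 / 2) - ((n : ℝ) - 1 - x) ^ (H - 1 / 2)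

/-- The quantity `I_n(i)`. -/
def InH (H : ℝ) (n i : ℕ) : ℝ :=
  ∫ x in ((i : ℝ) - 1)..(i : ℝ), x ^ (1 / 2 - H) * phiH H n x

/-- The function `g_n(x) = x^{1/2-H} φ_n^H(x)`. -/
def gmap (H : ℝ) (n : ℕ) (x : ℝ) : ℝ := x ^ (1 / 2 - H) * phiH H n x

/-- A point of the binary tree (encoded by the booleans `x 0, …, x (n-2)`, where `true ↦ 1` and
`false ↦ -1`) is an arbitrage point at level `n` of the `N`-period fractional binary market if
`|Y_n^{(N,H)}(x) + a_n^{(N)}| ≥ g_n^{(N,H)}`. -/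
def isArb (σ H : ℝ) (a : ℝ → ℝ) (N n : ℕ) (x : ℕ → Bool) : Prop :=
  gNH σ H N n ≤
    |(∑ i ∈ Finset.range (n - 1), JN σ H N n (i + 1) * (if x i then (1 : ℝ) else -1)) +
      a ((n : ℝ) / N) / N|

/-- The cardinality `|𝒜_n^{(N,H)}|` of the set of arbitrage points at level `n`. -/
def arbCard (σ H : ℝ) (a : ℝ → ℝ) (N n : ℕ) : ℕ :=
  {x : Fin (n - 1) → Bool |
    isArb σ H a N n (fun i => if h : i < n - 1 then x ⟨i, h⟩ else false)}.ncard

/-- The cardinality `|𝒜_𝒫^{(N,H)}|` of the set of arbitrage paths. -/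
def arbPathCard (σ H : ℝ) (a : ℝ → ℝ) (N : ℕ) : ℕ :=
  {x : Fin (N - 1) → Bool | ∃ n, 1 ≤ n ∧ n ≤ N ∧
    isArb σ H a N n (fun i => if h : i < N - 1 then x ⟨i, h⟩ else false)}.ncard


lemma my_measurable_rpow_const (q : ℝ) : Measurable fun v : ℝ => v ^ q := by
  have h : (fun v : ℝ => v ^ q) = fun v =>
      if v = 0 then (0:ℝ) ^ q
      else Real.exp (Real.log v * q) * (if v < 0 then Real.cos (q * Real.pi) else 1) := by
    funext v
    rcases lt_trichotomy v 0 with h | h | h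
    · rw [if_neg h.ne, if_pos h, Real.rpow_def_of_neg h]
    · simp [h]
    · rw [if_neg h.ne', if_neg (not_lt.mpr h.le), Real.rpow_def_of_pos h, mul_one]
  rw [h]
  refine Measurable.ite (measurableSet_eq) measurable_const ?_
  exact ((Real.measurable_log.mul_const q).exp).mul
    (Measurable.ite measurableSet_Iio measurable_const measurable_const)

lemma my_intable_shift_rpow {q : ℝ} (hq : -1 < q) (d : ℝ) :
    IntervalIntegrable (fun v : ℝ => (v + d) ^ q) volume 0 1 := by
  have := (intervalIntegral.intervalIntegrable_rpow' hq (a := 0 + d) (b := 1 + d)).comp_add_right d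
  simpa using this

lemma my_integral_shift_rpow {q : ℝ} (hq : -1 < q) (d : ℝ) :
    (∫ v in (0:ℝ)..1, (v + d) ^ q) = ((1 + d) ^ (q+1) - d ^ (q+1)) / (q+1) := by
  rw [intervalIntegral.integral_comp_add_right (fun x => x ^ q) d,
    integral_rpow (Or.inl hq)]
  norm_num


lemma my_aux_inner {H : ℝ} (hH1 : 1/2 < H) (hH2 : H < 1) {c x : ℝ} (hc : 1 ≤ c) (hx : x ≤ c) :
    c ^ (H - 1/2) * (((c + 1 - x) ^ (H - 1/2) - (c - x) ^ (H - 1/2)) / (H - 1/2))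
        ≤ (∫ v in (0:ℝ)..1, (v + c) ^ (H - 1/2) * (v + c - x) ^ (H - 3/2)) ∧
      (∫ v in (0:ℝ)..1, (v + c) ^ (H - 1/2) * (v + c - x) ^ (H - 3/2))
        ≤ (c + 1) ^ (H - 1/2) * (((c + 1 - x) ^ (H - 1/2) - (c - x) ^ (H - 1/2)) / (H - 1/2)) := by
  have hp : (0:ℝ) < H - 1/2 := by linarith
  have hq : (-1:ℝ) < H - 3/2 := by linarith
  have hd : 0 ≤ c - x := by linarith
  have hbase : IntervalIntegrable (fun v : ℝ => (v + (c - x)) ^ (H - 3/2)) volume 0 1 :=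
    my_intable_shift_rpow hq _
  have hval : (∫ v in (0:ℝ)..1, (v + (c - x)) ^ (H - 3/2))
      = ((c + 1 - x) ^ (H - 1/2) - (c - x) ^ (H - 1/2)) / (H - 1/2) := by
    rw [my_integral_shift_rpow hq]
    rw [show 1 + (c - x) = c + 1 - x by ring, show H - 3/2 + 1 = H - 1/2 by ring]
  have hfun : (fun v : ℝ => (v + c) ^ (H - 1/2) * (v + c - x) ^ (H - 3/2))
      = fun v => (v + c) ^ (H - 1/2) * (v + (c - x)) ^ (H - 3/2) :=
    funext fun v => by rw [show v + c - x = v + (c - x) by ring]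
  have hmain : IntervalIntegrable
      (fun v : ℝ => (v + c) ^ (H - 1/2) * (v + (c - x)) ^ (H - 3/2)) volume 0 1 := by
    apply (hbase.const_mul ((c + 1) ^ (H - 1/2))).mono_fun'
    · exact (((my_measurable_rpow_const _).comp (measurable_id.add_const c)).mul
        ((my_measurable_rpow_const _).comp (measurable_id.add_const (c - x)))).aestronglyMeasurable
    · filter_upwards [ae_restrict_mem measurableSet_uIoc] with v hv
      rw [Set.uIoc_of_le (zero_le_one)] at hv
      have hv0 : 0 < v := hv.1
      have h1 : 0 ≤ (v + (c - x)) ^ (H - 3/2) := Real.rpow_nonneg (by linarith) _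
      have h2 : 0 ≤ (v + c) ^ (H - 1/2) := Real.rpow_nonneg (by linarith) _
      rw [Real.norm_eq_abs, abs_of_nonneg (mul_nonneg h2 h1)]
      exact mul_le_mul_of_nonneg_right
        (Real.rpow_le_rpow (by linarith) (by linarith [hv.2]) hp.le) h1
  constructor
  · rw [hfun, ← hval, ← intervalIntegral.integral_const_mul]
    apply intervalIntegral.integral_mono_on zero_le_one (hbase.const_mul _) hmain
    intro v hv
    exact mul_le_mul_of_nonneg_right
      (Real.rpow_le_rpow (by linarith) (by linarith [hv.1]) hp.le)
      (Real.rpow_nonneg (by linarith [hv.1]) _)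
  · rw [hfun, ← hval, ← intervalIntegral.integral_const_mul]
    apply intervalIntegral.integral_mono_on zero_le_one hmain (hbase.const_mul _)
    intro v hv
    exact mul_le_mul_of_nonneg_right
      (Real.rpow_le_rpow (by linarith [hv.1]) (by linarith [hv.2]) hp.le)
      (Real.rpow_nonneg (by linarith [hv.1]) _)

lemma my_aux_meas (H c : ℝ) :
    StronglyMeasurable fun x : ℝ =>
      ∫ v in (0:ℝ)..1, (v + c) ^ (H - 1/2) * (v + c - x) ^ (H - 3/2) := by
  have h : (fun x : ℝ => ∫ v in (0:ℝ)..1, (v + c) ^ (H - 1/2) * (v + c - x) ^ (H - 3/2))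
      = fun x : ℝ => ∫ v, (fun p : ℝ × ℝ => (p.2 + c) ^ (H - 1/2) * (p.2 + c - p.1) ^ (H - 3/2))
          (x, v) ∂(volume.restrict (Set.Ioc (0:ℝ) 1)) :=
    funext fun x => intervalIntegral.integral_of_le zero_le_one
  rw [h]
  have hm : Measurable fun p : ℝ × ℝ => (p.2 + c) ^ (H - 1/2) * (p.2 + c - p.1) ^ (H - 3/2) :=
    ((my_measurable_rpow_const _).comp (measurable_snd.add_const c)).mul
      ((my_measurable_rpow_const _).comp ((measurable_snd.add_const c).sub measurable_fst))
  exact MeasureTheory.StronglyMeasurable.integral_prod_right'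
    (ν := volume.restrict (Set.Ioc (0:ℝ) 1)) hm.stronglyMeasurable


lemma my_aux1 {H σ : ℝ} (hH1 : 1/2 < H) (hH2 : H < 1) (hσ : 0 < σ) (hcH : 0 < cH H)
    {n i : ℕ} (hi : 1 ≤ i) (hin : i ≤ n - 1) :
    σ * cH H * ((n : ℝ) - 1) ^ (H - 1 / 2) * InH H n i ≤ jH σ H n i ∧
      jH σ H n i ≤ σ * cH H * (n : ℝ) ^ (H - 1 / 2) * InH H n i := by
  have hp : (0:ℝ) < H - 1/2 := by linarith
  have hr : (-1:ℝ) < 1/2 - H := by linarith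
  have hCH : 0 < CH H := mul_pos hcH hp
  have hK : (0:ℝ) ≤ σ * CH H := (mul_pos hσ hCH).le
  have hn2 : 2 ≤ n := by omega
  have hin' : i + 1 ≤ n := by omega
  have hiR : (1:ℝ) ≤ (i:ℝ) := by exact_mod_cast hi
  have hic : (i:ℝ) ≤ (n:ℝ) - 1 := by
    have : ((i:ℝ) + 1) ≤ (n:ℝ) := by exact_mod_cast hin'
    linarith
  have hc1 : (1:ℝ) ≤ (n:ℝ) - 1 := le_trans hiR hic
  set c : ℝ := (n:ℝ) - 1 with hcdef
  set A : ℝ → ℝ := fun x =>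
    ∫ v in (0:ℝ)..1, (v + c) ^ (H - 1/2) * (v + c - x) ^ (H - 3/2) with hAdef
  have hjH : jH σ H n i = σ * CH H * ∫ x in ((i:ℝ) - 1)..(i:ℝ), x ^ (1/2 - H) * A x := by
    unfold jH
    congr 1
    apply intervalIntegral.integral_congr
    intro x _
    dsimp only
    have : (∫ v in (0:ℝ)..1, (v + ↑n - 1) ^ (H - 1/2) * (v + ↑n - 1 - x) ^ (H - 3/2)) = A x := by
      rw [hAdef]
      apply intervalIntegral.integral_congr
      intro v _
      dsimp only
      rw [show v + (n:ℝ) - 1 = v + c by rw [hcdef]; ring]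
    rw [this]
  have hphi : ∀ x : ℝ, (c + 1 - x) ^ (H - 1/2) - (c - x) ^ (H - 1/2) = phiH H n x := by
    intro x
    rw [phiH, hcdef, show (n:ℝ) - 1 + 1 - x = (n:ℝ) - x by ring]
  -- integrability of the comparison functions
  have hii : (i:ℝ) - 1 ≤ (i:ℝ) := by linarith
  have hxr_int : IntervalIntegrable (fun x : ℝ => x ^ (1/2 - H)) volume ((i:ℝ) - 1) i :=
    intervalIntegral.intervalIntegrable_rpow' hr
  have hphi_cont : ContinuousOn (fun x : ℝ => phiH H n x) (Set.uIcc ((i:ℝ) - 1) i) := by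
    apply Continuous.continuousOn
    unfold phiH
    exact ((continuous_const.sub continuous_id).rpow_const (fun x => Or.inr hp.le)).sub
      ((continuous_const.sub continuous_id).rpow_const (fun x => Or.inr hp.le))
  have hlow_int : IntervalIntegrable (fun x : ℝ => x ^ (1/2 - H) * phiH H n x)
      volume ((i:ℝ) - 1) i := hxr_int.mul_continuousOn hphi_cont
  -- nonnegativity facts on the interval
  have hphi0 : ∀ x ∈ Set.Icc ((i:ℝ) - 1) (i:ℝ), 0 ≤ phiH H n x := by
    intro x hx
    rw [phiH]
    apply sub_nonneg.mpr
    apply Real.rpow_le_rpow (by linarith [hx.2, hic]) (by linarith) hp.le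
  have hA0 : ∀ x ∈ Set.Icc ((i:ℝ) - 1) (i:ℝ), 0 ≤ A x := by
    intro x hx
    refine le_trans ?_ (my_aux_inner hH1 hH2 hc1 (le_trans hx.2 hic)).1
    rw [hphi x]
    exact mul_nonneg (Real.rpow_nonneg (by linarith) _)
      (div_nonneg (hphi0 x hx) hp.le)
  have hA_int : IntervalIntegrable (fun x : ℝ => x ^ (1/2 - H) * A x)
      volume ((i:ℝ) - 1) i := by
    apply (hlow_int.const_mul ((n:ℝ) ^ (H - 1/2) / (H - 1/2))).mono_fun'
    · exact ((my_measurable_rpow_const _).aestronglyMeasurable).mul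
        (my_aux_meas H c).aestronglyMeasurable
    · filter_upwards [ae_restrict_mem measurableSet_uIoc] with x hx
      rw [Set.uIoc_of_le hii] at hx
      have hx' : x ∈ Set.Icc ((i:ℝ) - 1) (i:ℝ) := ⟨hx.1.le, hx.2⟩
      have hx0 : (0:ℝ) ≤ x := by linarith [hx.1]
      have hub := (my_aux_inner hH1 hH2 hc1 (le_trans hx.2 hic)).2
      rw [hphi x] at hub
      rw [Real.norm_eq_abs, abs_of_nonneg (mul_nonneg (Real.rpow_nonneg hx0 _) (hA0 x hx'))]
      calc x ^ (1/2 - H) * A x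
          ≤ x ^ (1/2 - H) * ((c + 1) ^ (H - 1/2) * (phiH H n x / (H - 1/2))) :=
            mul_le_mul_of_nonneg_left hub (Real.rpow_nonneg hx0 _)
        _ = (n:ℝ) ^ (H - 1/2) / (H - 1/2) * (x ^ (1/2 - H) * phiH H n x) := by
            rw [show c + 1 = (n:ℝ) by rw [hcdef]; ring]; ring
  have key : ∀ K I : ℝ, σ * cH H * K * I = σ * CH H * (K / (H - 1/2) * I) := by
    intro K I
    have hp' : H - 1/2 ≠ 0 := ne_of_gt hp
    have h2 : σ * CH H * (K / (H - 1/2) * I) = σ * cH H * K * I := by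
      rw [CH, div_eq_mul_inv]
      calc σ * (cH H * (H - 1/2)) * (K * (H - 1/2)⁻¹ * I)
          = σ * cH H * K * I * ((H - 1/2) * (H - 1/2)⁻¹) := by ring
        _ = σ * cH H * K * I := by rw [mul_inv_cancel₀ hp', mul_one]
    exact h2.symm
  constructor
  · rw [hjH]
    have h1 : σ * cH H * ((n:ℝ) - 1) ^ (H - 1/2) * InH H n i
        = σ * CH H * ∫ x in ((i:ℝ) - 1)..(i:ℝ),
            (c ^ (H - 1/2) / (H - 1/2)) * (x ^ (1/2 - H) * phiH H n x) := by
      rw [intervalIntegral.integral_const_mul]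
      unfold InH
      rw [← hcdef]
      exact key _ _
    rw [h1]
    apply mul_le_mul_of_nonneg_left _ hK
    apply intervalIntegral.integral_mono_on hii (hlow_int.const_mul _) hA_int
    intro x hx
    have hx0 : (0:ℝ) ≤ x := by linarith [hx.1]
    have hlb := (my_aux_inner hH1 hH2 hc1 (le_trans hx.2 hic)).1
    rw [hphi x] at hlb
    calc c ^ (H - 1/2) / (H - 1/2) * (x ^ (1/2 - H) * phiH H n x)
        = x ^ (1/2 - H) * (c ^ (H - 1/2) * (phiH H n x / (H - 1/2))) := by ring
      _ ≤ x ^ (1/2 - H) * A x := mul_le_mul_of_nonneg_left hlb (Real.rpow_nonneg hx0 _)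
  · rw [hjH]
    have h1 : σ * cH H * (n:ℝ) ^ (H - 1/2) * InH H n i
        = σ * CH H * ∫ x in ((i:ℝ) - 1)..(i:ℝ),
            ((n:ℝ) ^ (H - 1/2) / (H - 1/2)) * (x ^ (1/2 - H) * phiH H n x) := by
      rw [intervalIntegral.integral_const_mul]
      unfold InH
      exact key _ _
    rw [h1]
    apply mul_le_mul_of_nonneg_left _ hK
    apply intervalIntegral.integral_mono_on hii hA_int (hlow_int.const_mul _)
    intro x hx
    have hx0 : (0:ℝ) ≤ x := by linarith [hx.1]
    have hub := (my_aux_inner hH1 hH2 hc1 (le_trans hx.2 hic)).2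
    rw [hphi x] at hub
    calc x ^ (1/2 - H) * A x
        ≤ x ^ (1/2 - H) * ((c + 1) ^ (H - 1/2) * (phiH H n x / (H - 1/2))) :=
          mul_le_mul_of_nonneg_left hub (Real.rpow_nonneg hx0 _)
      _ = (n:ℝ) ^ (H - 1/2) / (H - 1/2) * (x ^ (1/2 - H) * phiH H n x) := by
          rw [show c + 1 = (n:ℝ) by rw [hcdef]; ring]; ring

lemma my_fact {H m : ℝ} (hH1 : 1/2 < H) (hmR : 2 ≤ m) :
    (m - 1) ^ (1/2 - H) * m ^ (H - 1/2) = (1 + 1 / (m - 1)) ^ (H - 1/2) := by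
  have hm10 : (0:ℝ) < m - 1 := by linarith
  rw [show 1 + 1 / (m - 1) = m / (m - 1) by
      rw [one_add_div (ne_of_gt hm10), show m - 1 + 1 = m by ring],
    Real.div_rpow (by linarith) hm10.le,
    show (1/2 - H) = -(H - 1/2) by ring, Real.rpow_neg hm10.le, div_eq_mul_inv]
  ring

set_option maxHeartbeats 1600000 in
lemma my_aux2 {H σ : ℝ} (hH1 : 1/2 < H) (hH2 : H < 1) (hσ : 0 < σ) (hcH : 0 < cH H)
    {n : ℕ} (hn : 1 < n) :
    gH σ H ≤ gnH σ H n ∧ gnH σ H n ≤ gH σ H * (1 + 1 / ((n : ℝ) - 1)) ^ (H - 1 / 2) := by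
  have hp : (0:ℝ) < H - 1/2 := by linarith
  have hp' : H - 1/2 ≠ 0 := ne_of_gt hp
  have hq : (-1:ℝ) < H - 3/2 := by linarith
  have hCH : 0 < CH H := mul_pos hcH hp
  have hK : (0:ℝ) ≤ σ * CH H := (mul_pos hσ hCH).le
  have hmR : (2:ℝ) ≤ (n:ℝ) := by exact_mod_cast hn
  set m : ℝ := (n:ℝ) with hmdef
  have hmm : m - 1 ≤ m := by linarith
  -- the inner integral
  set B : ℝ → ℝ := fun x =>
    ∫ y in (0:ℝ)..1, (y * (m - x) + x) ^ (H - 1/2) * y ^ (H - 3/2) with hBdef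
  have hbase : IntervalIntegrable (fun y : ℝ => y ^ (H - 3/2)) volume 0 1 :=
    intervalIntegral.intervalIntegrable_rpow' hq
  have hbaseval : (∫ y in (0:ℝ)..1, y ^ (H - 3/2)) = 1 / (H - 1/2) := by
    rw [integral_rpow (Or.inl hq), show H - 3/2 + 1 = H - 1/2 by ring, Real.one_rpow,
      Real.zero_rpow hp']
    norm_num
  -- pointwise bounds for B on [m-1, m]
  have hBbounds : ∀ x ∈ Set.Icc (m - 1) m,
      x ^ (H - 1/2) * (1 / (H - 1/2)) ≤ B x ∧ B x ≤ m ^ (H - 1/2) * (1 / (H - 1/2)) := by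
    intro x hx
    have hx1 : (1:ℝ) ≤ x := by linarith [hx.1]
    have hxm : x ≤ m := hx.2
    have hBint : IntervalIntegrable
        (fun y : ℝ => (y * (m - x) + x) ^ (H - 1/2) * y ^ (H - 3/2)) volume 0 1 := by
      apply (hbase.const_mul (m ^ (H - 1/2))).mono_fun'
      · exact (((my_measurable_rpow_const _).comp
          ((measurable_id.mul_const (m - x)).add_const x)).mul
          (my_measurable_rpow_const _)).aestronglyMeasurable
      · filter_upwards [ae_restrict_mem measurableSet_uIoc] with y hy
        rw [Set.uIoc_of_le (zero_le_one)] at hy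
        have hy0 : 0 < y := hy.1
        have hb0 : (0:ℝ) ≤ y * (m - x) + x := by nlinarith [hy.1.le, hy.2]
        have h1 : 0 ≤ y ^ (H - 3/2) := Real.rpow_nonneg hy0.le _
        have h2 : 0 ≤ (y * (m - x) + x) ^ (H - 1/2) := Real.rpow_nonneg hb0 _
        rw [Real.norm_eq_abs, abs_of_nonneg (mul_nonneg h2 h1)]
        refine mul_le_mul_of_nonneg_right (Real.rpow_le_rpow hb0 ?_ hp.le) h1
        nlinarith [hy.1.le, hy.2]
    constructor
    · rw [← hbaseval, ← intervalIntegral.integral_const_mul, hBdef]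
      apply intervalIntegral.integral_mono_on zero_le_one (hbase.const_mul _) hBint
      intro y hy
      refine mul_le_mul_of_nonneg_right (Real.rpow_le_rpow (by linarith) ?_ hp.le)
        (Real.rpow_nonneg hy.1 _)
      nlinarith [hy.1, hy.2]
    · rw [← hbaseval, ← intervalIntegral.integral_const_mul, hBdef]
      apply intervalIntegral.integral_mono_on zero_le_one hBint (hbase.const_mul _)
      intro y hy
      refine mul_le_mul_of_nonneg_right (Real.rpow_le_rpow (by nlinarith [hy.1, hy.2]) ?_ hp.le)
        (Real.rpow_nonneg hy.1 _)
      nlinarith [hy.1, hy.2]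
  have hB0 : ∀ x ∈ Set.Icc (m - 1) m, 0 ≤ B x := by
    intro x hx
    refine le_trans ?_ (hBbounds x hx).1
    exact mul_nonneg (Real.rpow_nonneg (by linarith [hx.1]) _) (by positivity)
  -- measurability of B
  have hBmeas : StronglyMeasurable B := by
    have h : B = fun x : ℝ => ∫ y, (fun p : ℝ × ℝ =>
        (p.2 * (m - p.1) + p.1) ^ (H - 1/2) * p.2 ^ (H - 3/2)) (x, y)
          ∂(volume.restrict (Set.Ioc (0:ℝ) 1)) :=
      funext fun x => intervalIntegral.integral_of_le zero_le_one
    rw [h]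
    have hm2 : Measurable fun p : ℝ × ℝ =>
        (p.2 * (m - p.1) + p.1) ^ (H - 1/2) * p.2 ^ (H - 3/2) :=
      ((my_measurable_rpow_const _).comp
        ((measurable_snd.mul (measurable_const.sub measurable_fst)).add measurable_fst)).mul
        ((my_measurable_rpow_const _).comp measurable_snd)
    exact MeasureTheory.StronglyMeasurable.integral_prod_right'
      (ν := volume.restrict (Set.Ioc (0:ℝ) 1)) hm2.stronglyMeasurable
  -- integral of (m - x)^(H - 1/2)
  have hIint : IntervalIntegrable (fun x : ℝ => (m - x) ^ (H - 1/2)) volume (m - 1) m := by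
    have := (intervalIntegral.intervalIntegrable_rpow'
      (show (-1:ℝ) < H - 1/2 by linarith) (a := 1) (b := 0)).comp_sub_left m
    simpa using this
  have hIval : (∫ x in (m - 1)..m, (m - x) ^ (H - 1/2)) = 1 / (H + 1/2) := by
    rw [intervalIntegral.integral_comp_sub_left (fun y => y ^ (H - 1/2)) m]
    rw [show m - m = (0:ℝ) by ring, show m - (m - 1) = (1:ℝ) by ring]
    rw [integral_rpow (Or.inl (show (-1:ℝ) < H - 1/2 by linarith))]
    rw [show H - 1/2 + 1 = H + 1/2 by ring, Real.one_rpow,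
      Real.zero_rpow (show H + 1/2 ≠ 0 by intro h; linarith [h])]
    norm_num
  -- integrability of the main integrand
  have hf_int : IntervalIntegrable
      (fun x : ℝ => x ^ (1/2 - H) * (m - x) ^ (H - 1/2) * B x) volume (m - 1) m := by
    apply (hIint.const_mul ((m - 1) ^ (1/2 - H) * (m ^ (H - 1/2) * (1 / (H - 1/2))))).mono_fun'
    · exact (((my_measurable_rpow_const _).aestronglyMeasurable.mul
        ((my_measurable_rpow_const _).comp
          (measurable_const.sub measurable_id)).aestronglyMeasurable).mul
        hBmeas.aestronglyMeasurable)
    · filter_upwards [ae_restrict_mem measurableSet_uIoc] with x hx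
      rw [Set.uIoc_of_le hmm] at hx
      have hx' : x ∈ Set.Icc (m - 1) m := ⟨hx.1.le, hx.2⟩
      have hx1 : (1:ℝ) ≤ x := by linarith [hx.1.le]
      have hmx0 : (0:ℝ) ≤ m - x := by linarith [hx.2]
      have hr0 : 0 ≤ x ^ (1/2 - H) := Real.rpow_nonneg (by linarith) _
      have hmxp : 0 ≤ (m - x) ^ (H - 1/2) := Real.rpow_nonneg hmx0 _
      rw [Real.norm_eq_abs,
        abs_of_nonneg (mul_nonneg (mul_nonneg hr0 hmxp) (hB0 x hx'))]
      have hxr : x ^ (1/2 - H) ≤ (m - 1) ^ (1/2 - H) :=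
        Real.rpow_le_rpow_of_nonpos (by linarith) hx.1.le (by linarith)
      calc x ^ (1/2 - H) * (m - x) ^ (H - 1/2) * B x
          ≤ (m - 1) ^ (1/2 - H) * (m - x) ^ (H - 1/2) * (m ^ (H - 1/2) * (1 / (H - 1/2))) := by
            apply mul_le_mul (mul_le_mul_of_nonneg_right hxr hmxp) (hBbounds x hx').2
              (hB0 x hx')
            exact mul_nonneg (Real.rpow_nonneg (by linarith) _) hmxp
        _ = (m - 1) ^ (1/2 - H) * (m ^ (H - 1/2) * (1 / (H - 1/2))) * (m - x) ^ (H - 1/2) := by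
            ring
  -- the value of gnH as an integral
  have hgnH : gnH σ H n = σ * CH H *
      ∫ x in (m - 1)..m, x ^ (1/2 - H) * (m - x) ^ (H - 1/2) * B x := rfl
  constructor
  · -- lower bound
    have h1 : gH σ H = σ * CH H *
        ∫ x in (m - 1)..m, (1 / (H - 1/2)) * (m - x) ^ (H - 1/2) := by
      rw [intervalIntegral.integral_const_mul, hIval, gH, CH]
      have heq : σ * (cH H * (H - 1/2)) * (1 / (H - 1/2) * (1 / (H + 1/2)))
          = σ * cH H / (H + 1/2) * ((H - 1/2) * (1 / (H - 1/2))) := by ring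
      rw [heq, mul_one_div, div_self hp', mul_one]
    rw [hgnH, h1]
    apply mul_le_mul_of_nonneg_left _ hK
    apply intervalIntegral.integral_mono_on hmm (hIint.const_mul _) hf_int
    intro x hx
    have hx1 : (1:ℝ) ≤ x := by linarith [hx.1]
    have hx0 : (0:ℝ) < x := by linarith
    have hmx0 : (0:ℝ) ≤ m - x := by linarith [hx.2]
    have hone : x ^ (1/2 - H) * x ^ (H - 1/2) = 1 := by
      rw [← Real.rpow_add hx0, show 1/2 - H + (H - 1/2) = (0:ℝ) by ring, Real.rpow_zero]
    have hlb := (hBbounds x hx).1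
    calc (1 / (H - 1/2)) * (m - x) ^ (H - 1/2)
        = x ^ (1/2 - H) * (m - x) ^ (H - 1/2) * (x ^ (H - 1/2) * (1 / (H - 1/2))) := by
          rw [show x ^ (1/2 - H) * (m - x) ^ (H - 1/2) * (x ^ (H - 1/2) * (1 / (H - 1/2)))
            = (x ^ (1/2 - H) * x ^ (H - 1/2)) * ((m - x) ^ (H - 1/2) * (1 / (H - 1/2)))
            by ring, hone, one_mul]; ring
      _ ≤ x ^ (1/2 - H) * (m - x) ^ (H - 1/2) * B x := by
          apply mul_le_mul_of_nonneg_left hlb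
          exact mul_nonneg (Real.rpow_nonneg hx0.le _) (Real.rpow_nonneg hmx0 _)
  · -- upper bound
    have hfact : (m - 1) ^ (1/2 - H) * m ^ (H - 1/2) = (1 + 1 / (m - 1)) ^ (H - 1/2) :=
      my_fact hH1 hmR
    have h1 : gH σ H * (1 + 1 / (m - 1)) ^ (H - 1/2) = σ * CH H *
        ∫ x in (m - 1)..m,
          ((m - 1) ^ (1/2 - H) * (m ^ (H - 1/2) * (1 / (H - 1/2)))) * (m - x) ^ (H - 1/2) := by
      rw [intervalIntegral.integral_const_mul, hIval, ← hfact, gH, CH]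
      have heq : σ * (cH H * (H - 1/2)) *
            ((m - 1) ^ (1/2 - H) * (m ^ (H - 1/2) * (1 / (H - 1/2))) * (1 / (H + 1/2)))
          = σ * cH H / (H + 1/2) * ((m - 1) ^ (1/2 - H) * m ^ (H - 1/2)) *
            ((H - 1/2) * (1 / (H - 1/2))) := by ring
      rw [heq, mul_one_div, div_self hp', mul_one]
    rw [hgnH, h1]
    apply mul_le_mul_of_nonneg_left _ hK
    apply intervalIntegral.integral_mono_on hmm hf_int (hIint.const_mul _)
    intro x hx
    have hx1 : (1:ℝ) ≤ x := by linarith [hx.1]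
    have hmx0 : (0:ℝ) ≤ m - x := by linarith [hx.2]
    have hmxp : 0 ≤ (m - x) ^ (H - 1/2) := Real.rpow_nonneg hmx0 _
    have hxr : x ^ (1/2 - H) ≤ (m - 1) ^ (1/2 - H) :=
      Real.rpow_le_rpow_of_nonpos (by linarith) hx.1 (by linarith)
    calc x ^ (1/2 - H) * (m - x) ^ (H - 1/2) * B x
        ≤ (m - 1) ^ (1/2 - H) * (m - x) ^ (H - 1/2) * (m ^ (H - 1/2) * (1 / (H - 1/2))) := by
          apply mul_le_mul (mul_le_mul_of_nonneg_right hxr hmxp) (hBbounds x hx).2 (hB0 x hx)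
          exact mul_nonneg (Real.rpow_nonneg (by linarith) _) hmxp
      _ = (m - 1) ^ (1/2 - H) * (m ^ (H - 1/2) * (1 / (H - 1/2))) * (m - x) ^ (H - 1/2) := by
          ring


/-- Lemma 4.2: bounds for `j_n^H(i)` in terms of `I_n(i)`, and bounds for `g_n^H`. -/
theorem statement1 (H σ : ℝ) (hH : H ∈ Set.Ioo (1 / 2 : ℝ) 1) (hσ : 0 < σ) :
    (∀ n i : ℕ, 1 ≤ i → i ≤ n - 1 →
      σ * cH H * ((n : ℝ) - 1) ^ (H - 1 / 2) * InH H n i ≤ jH σ H n i ∧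
      jH σ H n i ≤ σ * cH H * (n : ℝ) ^ (H - 1 / 2) * InH H n i) ∧
    (∀ n : ℕ, 1 < n →
      gH σ H ≤ gnH σ H n ∧
      gnH σ H n ≤ gH σ H * (1 + 1 / ((n : ℝ) - 1)) ^ (H - 1 / 2)) := by
  obtain ⟨hH1, hH2⟩ := hH
  have hcH : 0 < cH H := by
    unfold cH
    apply Real.sqrt_pos.mpr
    exact div_pos (mul_pos (by linarith : (0:ℝ) < 2 * H) (Real.Gamma_pos_of_pos (by linarith)))
      (mul_pos (Real.Gamma_pos_of_pos (by linarith)) (Real.Gamma_pos_of_pos (by linarith)))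
  exact ⟨fun n i hi hin => my_aux1 hH1 hH2 hσ hcH hi hin,
    fun n hn => my_aux2 hH1 hH2 hσ hcH hn⟩

end
end

section
/- The probability P(|𝒴_H| > g_H) tends to 0 as H → 1/2 from above. -/
open MeasureTheory Filter Set ProbabilityTheory
open scoped ENNReal NNReal

noncomputable section

/-- Mean value theorem for `rpow`. -/
lemma rpow_mvt (q : ℝ) {a b : ℝ} (ha : 0 < a) (hab : a < b) :
    ∃ c, a < c ∧ c < b ∧ b ^ q - a ^ q = q * c ^ (q - 1) * (b - a) := by
  have hcont : ContinuousOn (fun x : ℝ => x ^ q) (Set.Icc a b) := fun x hx =>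
    (Real.continuousAt_rpow_const x q (Or.inl (lt_of_lt_of_le ha hx.1).ne')).continuousWithinAt
  have hderiv : ∀ x ∈ Set.Ioo a b, HasDerivAt (fun x : ℝ => x ^ q) (q * x ^ (q - 1)) x :=
    fun x hx => Real.hasDerivAt_rpow_const (Or.inl (ha.trans hx.1).ne')
  obtain ⟨c, hc, hc'⟩ := exists_hasDerivAt_eq_slope (fun x : ℝ => x ^ q)
    (fun x => q * x ^ (q - 1)) hab hcont hderiv
  refine ⟨c, hc.1, hc.2, ?_⟩
  rw [eq_div_iff (sub_ne_zero.2 hab.ne')] at hc'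
  linarith [hc']

lemma diff2_bound {p a : ℝ} (hp1 : 1 < p) (hp2 : p ≤ 2) (ha : 2 ≤ a) :
    0 ≤ (a + 1) ^ p + (a - 1) ^ p - 2 * a ^ p ∧
      (a + 1) ^ p + (a - 1) ^ p - 2 * a ^ p ≤ 4 * (p - 1) * (a - 1) ^ (p - 2) := by
  have ha0 : (0:ℝ) < a - 1 := by linarith
  obtain ⟨c₁, hc₁a, hc₁b, h₁⟩ := rpow_mvt p (show (0:ℝ) < a by linarith) (show a < a + 1 by linarith)
  obtain ⟨c₂, hc₂a, hc₂b, h₂⟩ := rpow_mvt p ha0 (show a - 1 < a by linarith)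
  obtain ⟨d, hda, hdb, hd⟩ := rpow_mvt (p - 1) ha0 (show a - 1 < a + 1 by linarith)
  have e1 : a + 1 - a = 1 := by ring
  have e2 : a - (a - 1) = 1 := by ring
  have e3 : a + 1 - (a - 1) = 2 := by ring
  rw [e1, mul_one] at h₁
  rw [e2, mul_one] at h₂
  rw [e3] at hd
  have key : (a + 1) ^ p + (a - 1) ^ p - 2 * a ^ p = p * c₁ ^ (p - 1) - p * c₂ ^ (p - 1) := by
    linarith [h₁, h₂]
  have hc₂0 : (0:ℝ) < c₂ := lt_trans ha0 hc₂a
  have hmono : c₂ ^ (p - 1) ≤ c₁ ^ (p - 1) :=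
    Real.rpow_le_rpow hc₂0.le (by linarith) (by linarith)
  constructor
  · rw [key]
    have : 0 ≤ p * (c₁ ^ (p - 1) - c₂ ^ (p - 1)) :=
      mul_nonneg (by linarith) (by linarith)
    linarith
  · -- upper bound
    have hub : c₁ ^ (p - 1) ≤ (a + 1) ^ (p - 1) :=
      Real.rpow_le_rpow (by linarith) hc₁b.le (by linarith)
    have hlb : (a - 1) ^ (p - 1) ≤ c₂ ^ (p - 1) :=
      Real.rpow_le_rpow ha0.le hc₂a.le (by linarith)
    have hdbd : d ^ (p - 2) ≤ (a - 1) ^ (p - 2) :=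
      Real.rpow_le_rpow_of_nonpos ha0 hda.le (by linarith)
    have hdpos : 0 ≤ d ^ (p - 2) := Real.rpow_nonneg (by linarith) _
    have e4 : p - 1 - 1 = p - 2 := by ring
    rw [e4] at hd
    have step : c₁ ^ (p - 1) - c₂ ^ (p - 1) ≤ (p - 1) * d ^ (p - 2) * 2 := by
      rw [← hd]; linarith
    rw [key]
    have hp0 : (0:ℝ) < p := by linarith
    nlinarith [step, hdbd, hdpos]

lemma rho_sq_le {h : ℝ} (h1 : 1/2 < h) (h2 : h ≤ 5/8) (k : ℕ) (hk : 1 ≤ k) :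
    (rho h (k + 1))^2 ≤ 4 * (2*h - 1)^2 * (k:ℝ) ^ (-(3:ℝ)/2) := by
  have hk1 : (1:ℝ) ≤ (k:ℝ) := by exact_mod_cast hk
  set p := 2 * h with hp
  have hp1 : 1 < p := by simp only [hp]; linarith
  have hp2 : p ≤ 2 := by simp only [hp]; linarith
  have ha : (2:ℝ) ≤ (k:ℝ) + 1 := by linarith
  obtain ⟨hlo, hhi⟩ := diff2_bound hp1 hp2 ha
  have hcast : rho h (k + 1) =
      (((k:ℝ) + 1 + 1) ^ p + ((k:ℝ) + 1 - 1) ^ p - 2 * ((k:ℝ) + 1) ^ p) / 2 := by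
    simp only [rho]
    push_cast
    simp only [hp]
  have e : (k:ℝ) + 1 - 1 = (k:ℝ) := by ring
  rw [e] at hhi hlo
  have hr0 : 0 ≤ rho h (k + 1) := by rw [hcast, e]; linarith
  have hrle : rho h (k + 1) ≤ 2 * (p - 1) * (k:ℝ) ^ (p - 2) := by
    rw [hcast, e]; linarith
  have hexp : (k:ℝ) ^ (p - 2) ≤ (k:ℝ) ^ (-(3:ℝ)/4) :=
    Real.rpow_le_rpow_of_exponent_le hk1 (by simp only [hp]; linarith)
  have hkpos : (0:ℝ) < (k:ℝ) := by linarith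
  have hsq : ((k:ℝ) ^ (-(3:ℝ)/4)) * ((k:ℝ) ^ (-(3:ℝ)/4)) = (k:ℝ) ^ (-(3:ℝ)/2) := by
    rw [← Real.rpow_add hkpos]; norm_num
  have hb : rho h (k + 1) ≤ 2 * (p - 1) * (k:ℝ) ^ (-(3:ℝ)/4) := by
    refine hrle.trans ?_
    have : (0:ℝ) ≤ 2 * (p - 1) := by linarith
    nlinarith [hexp, Real.rpow_nonneg hkpos.le (p-2)]
  have hpos4 : (0:ℝ) ≤ (k:ℝ) ^ (-(3:ℝ)/4) := Real.rpow_nonneg hkpos.le _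
  have := mul_self_le_mul_self hr0 hb
  calc (rho h (k+1))^2 = rho h (k+1) * rho h (k+1) := by ring
    _ ≤ (2 * (p - 1) * (k:ℝ) ^ (-(3:ℝ)/4)) * (2 * (p - 1) * (k:ℝ) ^ (-(3:ℝ)/4)) := this
    _ = 4 * (p - 1)^2 * (((k:ℝ) ^ (-(3:ℝ)/4)) * ((k:ℝ) ^ (-(3:ℝ)/4))) := by ring
    _ = 4 * (2*h - 1)^2 * (k:ℝ) ^ (-(3:ℝ)/2) := by rw [hsq, hp]

lemma sum_sq_lintegral {Ω : Type} [MeasurableSpace Ω] (P : Measure Ω) [IsProbabilityMeasure P]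
    (ξ : ℕ → Ω → ℝ) (hξmeas : ∀ i, Measurable (ξ i))
    (hξae : ∀ i, ∀ᵐ ω ∂P, ξ i ω = 1 ∨ ξ i ω = -1)
    (hmul : ∀ i j : ℕ, ∫ ω, ξ i ω * ξ j ω ∂P = if i = j then (1:ℝ) else 0)
    (a : ℕ → ℝ) (n : ℕ) :
    ∫⁻ ω, ENNReal.ofReal ((∑ k ∈ Finset.range n, a k * ξ k ω)^2) ∂P
      = ENNReal.ofReal (∑ k ∈ Finset.range n, (a k)^2) := by
  have hprod_int : ∀ i j : ℕ, Integrable (fun ω => ξ i ω * ξ j ω) P := by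
    intro i j
    refine (integrable_const (1:ℝ)).mono' ((hξmeas i).mul (hξmeas j)).aestronglyMeasurable ?_
    filter_upwards [hξae i, hξae j] with ω h1 h2
    rcases h1 with h1 | h1 <;> rcases h2 with h2 | h2 <;> rw [h1, h2] <;> norm_num
  have hSsq : ∀ ω, (∑ k ∈ Finset.range n, a k * ξ k ω)^2
      = ∑ i ∈ Finset.range n, ∑ j ∈ Finset.range n, a i * a j * (ξ i ω * ξ j ω) := by
    intro ω
    rw [sq, Finset.sum_mul_sum]
    exact Finset.sum_congr rfl fun i _ => Finset.sum_congr rfl fun j _ => by ring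
  have hterm : ∀ i j : ℕ, Integrable (fun ω => a i * a j * (ξ i ω * ξ j ω)) P :=
    fun i j => (hprod_int i j).const_mul _
  have hSint : Integrable (fun ω => (∑ k ∈ Finset.range n, a k * ξ k ω)^2) P := by
    have h0 : Integrable (fun ω => ∑ i ∈ Finset.range n, ∑ j ∈ Finset.range n,
        a i * a j * (ξ i ω * ξ j ω)) P :=
      integrable_finset_sum _ fun i _ => integrable_finset_sum _ fun j _ => hterm i j
    exact h0.congr (ae_of_all _ fun ω => (hSsq ω).symm)
  have hSval : ∫ ω, (∑ k ∈ Finset.range n, a k * ξ k ω)^2 ∂P = ∑ k ∈ Finset.range n, (a k)^2 := by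
    rw [integral_congr_ae (ae_of_all _ hSsq),
      integral_finset_sum _ (fun i _ => integrable_finset_sum _ fun j _ => hterm i j)]
    refine Finset.sum_congr rfl fun i hi => ?_
    rw [integral_finset_sum _ fun j _ => hterm i j]
    have h1 : ∀ j ∈ Finset.range n, ∫ ω, a i * a j * (ξ i ω * ξ j ω) ∂P
        = a i * a j * (if i = j then (1:ℝ) else 0) := by
      intro j _
      rw [integral_const_mul, hmul i j]
    rw [Finset.sum_congr rfl h1, Finset.sum_eq_single i
      (fun j _ hj => by rw [if_neg (Ne.symm hj), mul_zero]) (fun h => absurd hi h)]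
    rw [if_pos rfl, mul_one, sq]
  rw [← ofReal_integral_eq_lintegral_ofReal hSint (ae_of_all _ fun ω => sq_nonneg _), hSval]

/-- Proposition 3.3, first part: `P(|𝒴_H| > g_H) → 0` as `H → 1/2⁺`.  Here `ξ k` stands for the
Bernoulli variable `ξ_{k+1}` of the paper and `Y H` is the a.s. limit `𝒴_H` of the series. -/
theorem statement5 {Ω : Type} [MeasurableSpace Ω] (P : Measure Ω) [IsProbabilityMeasure P]
    (σ : ℝ) (hσ : 0 < σ)
    (ξ : ℕ → Ω → ℝ) (hξmeas : ∀ i, Measurable (ξ i))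
    (hξindep : iIndepFun ξ P)
    (hξdist : ∀ i, P {ω | ξ i ω = 1} = 1 / 2 ∧ P {ω | ξ i ω = -1} = 1 / 2)
    (Y : ℝ → Ω → ℝ) (hYmeas : ∀ H, Measurable (Y H))
    (hY : ∀ H ∈ Set.Ioo (1 / 2 : ℝ) 1, ∀ᵐ ω ∂P, Tendsto
      (fun n => ∑ k ∈ Finset.range n, 2 * gH σ H * rho (H / 2 + 1 / 4) (k + 1) * ξ k ω)
      atTop (nhds (Y H ω))) :
    Tendsto (fun H => (P {ω | gH σ H < |Y H ω|}).toReal)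
      (nhdsWithin (1 / 2) (Set.Ioo (1 / 2 : ℝ) 1)) (nhds 0) := by
  set l := nhdsWithin (1/2 : ℝ) (Set.Ioo (1/2 : ℝ) 1) with hl
  -- a.e. ξ i ∈ {1, -1}
  have hξae : ∀ i, ∀ᵐ ω ∂P, ξ i ω = 1 ∨ ξ i ω = -1 := by
    intro i
    have hA : MeasurableSet {ω | ξ i ω = 1} := hξmeas i (measurableSet_singleton 1)
    have hB : MeasurableSet {ω | ξ i ω = -1} := hξmeas i (measurableSet_singleton (-1))
    have hdisj : Disjoint {ω | ξ i ω = 1} {ω | ξ i ω = -1} := by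
      rw [Set.disjoint_left]
      intro ω h1 h2
      simp only [Set.mem_setOf_eq] at h1 h2
      rw [h1] at h2; norm_num at h2
    have hu : P ({ω | ξ i ω = 1} ∪ {ω | ξ i ω = -1}) = 1 := by
      rw [measure_union hdisj hB, (hξdist i).1, (hξdist i).2, ENNReal.add_halves]
    have hc : P ({ω | ξ i ω = 1} ∪ {ω | ξ i ω = -1})ᶜ = 0 := by
      rw [measure_compl (hA.union hB) (measure_ne_top _ _), hu, measure_univ, tsub_self]
    have hset : {a | ¬(ξ i a = 1 ∨ ξ i a = -1)} = ({ω | ξ i ω = 1} ∪ {ω | ξ i ω = -1})ᶜ := by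
      ext ω; simp [not_or]
    rw [ae_iff, hset]
    exact hc
  have hmean : ∀ i, ∫ ω, ξ i ω ∂P = 0 := by
    intro i
    have hA : MeasurableSet {ω | ξ i ω = 1} := hξmeas i (measurableSet_singleton 1)
    have hB : MeasurableSet {ω | ξ i ω = -1} := hξmeas i (measurableSet_singleton (-1))
    have heq : (fun ω => ξ i ω) =ᵐ[P]
        fun ω => Set.indicator {ω | ξ i ω = 1} (fun _ => (1:ℝ)) ω
          + Set.indicator {ω | ξ i ω = -1} (fun _ => (-1:ℝ)) ω := by
      filter_upwards [hξae i] with ω hω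
      rcases hω with h | h <;>
        · simp only [Set.indicator_apply, Set.mem_setOf_eq, h]
          norm_num
    rw [integral_congr_ae heq,
      integral_add ((integrable_const (1:ℝ)).indicator hA) ((integrable_const (-1:ℝ)).indicator hB),
      integral_indicator_const _ hA, integral_indicator_const _ hB, measureReal_def, measureReal_def, (hξdist i).1, (hξdist i).2]
    simp [ENNReal.toReal_div]
  have hint : ∀ i, Integrable (ξ i) P := by
    intro i
    refine (integrable_const (1:ℝ)).mono' (hξmeas i).aestronglyMeasurable ?_
    filter_upwards [hξae i] with ω hω
    rcases hω with h | h <;> rw [h] <;> norm_num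
  have hmul : ∀ i j : ℕ, ∫ ω, ξ i ω * ξ j ω ∂P = if i = j then (1:ℝ) else 0 := by
    intro i j
    by_cases hij : i = j
    · subst hij
      rw [if_pos rfl]
      have heq : (fun ω => ξ i ω * ξ i ω) =ᵐ[P] fun _ => (1:ℝ) := by
        filter_upwards [hξae i] with ω hω
        rcases hω with h | h <;> rw [h] <;> norm_num
      rw [integral_congr_ae heq]
      simp
    · rw [if_neg hij]
      have h0 : ∫ ω, ξ i ω * ξ j ω ∂P = (∫ ω, ξ i ω ∂P) * ∫ ω, ξ j ω ∂P :=
        (hξindep.indepFun hij).integral_mul_eq_mul_integral (hint i).aestronglyMeasurable (hint j).aestronglyMeasurable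
      rw [h0, hmean i, zero_mul]
  -- positivity of gH
  have hgpos : ∀ H ∈ Set.Ioo (1/2 : ℝ) 1, 0 < gH σ H := by
    intro H hH
    obtain ⟨h1, h2⟩ := hH
    have g1 : 0 < Real.Gamma (3/2 - H) := Real.Gamma_pos_of_pos (by linarith)
    have g2 : 0 < Real.Gamma (H + 1/2) := Real.Gamma_pos_of_pos (by linarith)
    have g3 : 0 < Real.Gamma (2 - 2*H) := Real.Gamma_pos_of_pos (by linarith)
    have hc : 0 < cH H := by
      refine Real.sqrt_pos.2 ?_
      have hH0 : (0:ℝ) < H := by linarith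
      positivity
    have : 0 < σ * cH H / (H + 1/2) := by positivity
    exact this
  -- key bound
  have key : ∀ H ∈ Set.Ioo (1/2 : ℝ) 1, P {ω | gH σ H < |Y H ω|} ≤
      ENNReal.ofReal 4 * ∑' k : ℕ, ENNReal.ofReal ((rho (H/2 + 1/4) (k+1))^2) := by
    intro H hH
    have hg : 0 < gH σ H := hgpos H hH
    set aa : ℕ → ℝ := fun k => 2 * gH σ H * rho (H / 2 + 1 / 4) (k + 1) with haa
    have hYH : ∀ᵐ ω ∂P, Tendsto (fun n => ∑ k ∈ Finset.range n, aa k * ξ k ω)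
        atTop (nhds (Y H ω)) := by
      have h0 := hY H hH
      simp only [haa]
      exact h0
    -- Fatou
    have hfatou : ∫⁻ ω, ENNReal.ofReal ((Y H ω)^2) ∂P ≤ ∑' k, ENNReal.ofReal ((aa k)^2) := by
      have hmeasS : ∀ n : ℕ, Measurable fun ω =>
          ENNReal.ofReal ((∑ k ∈ Finset.range n, aa k * ξ k ω)^2) := fun n =>
        ((Finset.measurable_sum _ fun k _ => (hξmeas k).const_mul _).pow_const 2).ennreal_ofReal
      have hcong : ∫⁻ ω, ENNReal.ofReal ((Y H ω)^2) ∂P = ∫⁻ ω,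
          Filter.liminf (fun n => ENNReal.ofReal ((∑ k ∈ Finset.range n, aa k * ξ k ω)^2))
            Filter.atTop ∂P := by
        refine lintegral_congr_ae ?_
        filter_upwards [hYH] with ω hω
        exact (((ENNReal.continuous_ofReal.tendsto _).comp (hω.pow 2)).liminf_eq).symm
      rw [hcong]
      refine le_trans (lintegral_liminf_le hmeasS) ?_
      have hval : ∀ n : ℕ, ∫⁻ ω, ENNReal.ofReal ((∑ k ∈ Finset.range n, aa k * ξ k ω)^2) ∂P
          = ∑ k ∈ Finset.range n, ENNReal.ofReal ((aa k)^2) := by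
        intro n
        rw [sum_sq_lintegral P ξ hξmeas hξae hmul aa n,
          ENNReal.ofReal_sum_of_nonneg fun k _ => sq_nonneg _]
      simp_rw [hval]
      exact le_of_eq ((ENNReal.tendsto_nat_tsum _).liminf_eq)
    -- Markov
    have hsub : {ω | gH σ H < |Y H ω|} ⊆
        {ω | ENNReal.ofReal ((gH σ H)^2) ≤ ENNReal.ofReal ((Y H ω)^2)} := by
      intro ω hω
      simp only [Set.mem_setOf_eq] at hω ⊢
      refine ENNReal.ofReal_le_ofReal ?_
      have h1 : (gH σ H)^2 ≤ |Y H ω|^2 := by nlinarith [hg.le, abs_nonneg (Y H ω)]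
      rwa [sq_abs] at h1
    have hmk := mul_meas_ge_le_lintegral₀ (μ := P)
      (((hYmeas H).pow_const 2).ennreal_ofReal.aemeasurable) (ENNReal.ofReal ((gH σ H)^2))
    have h2 : ENNReal.ofReal ((gH σ H)^2) * P {ω | gH σ H < |Y H ω|} ≤
        ∫⁻ ω, ENNReal.ofReal ((Y H ω)^2) ∂P :=
      le_trans (mul_le_mul_right (measure_mono hsub) _) hmk
    have hts : ∑' k, ENNReal.ofReal ((aa k)^2) = ENNReal.ofReal ((gH σ H)^2) *
        (ENNReal.ofReal 4 * ∑' k : ℕ, ENNReal.ofReal ((rho (H/2 + 1/4) (k+1))^2)) := by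
      rw [← ENNReal.tsum_mul_left, ← ENNReal.tsum_mul_left]
      refine tsum_congr fun k => ?_
      rw [← ENNReal.ofReal_mul (by norm_num), ← ENNReal.ofReal_mul (by positivity)]
      congr 1
      simp only [haa]
      ring
    rw [hts] at hfatou
    have h3 := le_trans h2 hfatou
    have hε0 : ENNReal.ofReal ((gH σ H)^2) ≠ 0 := by
      simp only [ne_eq, ENNReal.ofReal_eq_zero, not_le]
      positivity
    exact (ENNReal.mul_le_mul_iff_right hε0 ENNReal.ofReal_ne_top).1 h3
  -- summability of the majorant
  have hsumZ : Summable (fun k : ℕ => ((k:ℝ)+1) ^ (-(3:ℝ)/2)) := by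
    have h0 : Summable (fun n : ℕ => (n:ℝ) ^ (-(3:ℝ)/2)) := Real.summable_nat_rpow.2 (by norm_num)
    have h1 := (summable_nat_add_iff 1).2 h0
    refine h1.congr fun n => ?_
    push_cast
    ring_nf
  set Z : ℝ≥0∞ := ∑' k : ℕ, ENNReal.ofReal (((k:ℝ)+1) ^ (-(3:ℝ)/2)) with hZdef
  have hZtop : Z ≠ ⊤ := by
    rw [hZdef, ← ENNReal.ofReal_tsum_of_nonneg (fun k => Real.rpow_nonneg (by positivity) _) hsumZ]
    exact ENNReal.ofReal_ne_top
  -- bound on tail sums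
  have hTbound : ∀ H : ℝ, 1/2 < H → H < 3/4 →
      (∑' k : ℕ, ENNReal.ofReal ((rho (H/2 + 1/4) (k+1))^2)) ≤
        ENNReal.ofReal ((rho (H/2 + 1/4) 1)^2) + ENNReal.ofReal (4*(H - 1/2)^2) * Z := by
    intro H h1 h2
    have hh1 : 1/2 < H/2 + 1/4 := by linarith
    have hh2 : H/2 + 1/4 ≤ 5/8 := by linarith
    rw [tsum_eq_zero_add' ENNReal.summable]
    refine add_le_add le_rfl ?_
    calc ∑' k : ℕ, ENNReal.ofReal ((rho (H/2 + 1/4) (k+1+1))^2)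
        ≤ ∑' k : ℕ, ENNReal.ofReal (4*(2*(H/2 + 1/4)-1)^2 * ((k:ℝ)+1) ^ (-(3:ℝ)/2)) := by
          refine ENNReal.tsum_le_tsum fun k => ENNReal.ofReal_le_ofReal ?_
          have hb := rho_sq_le hh1 hh2 (k+1) (Nat.le_add_left 1 k)
          have hc : ((k+1:ℕ):ℝ) = (k:ℝ)+1 := by push_cast; ring
          rw [hc] at hb
          exact hb
      _ = ENNReal.ofReal (4*(2*(H/2 + 1/4)-1)^2) * Z := by
          rw [hZdef, ← ENNReal.tsum_mul_left]
          refine tsum_congr fun k => ?_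
          rw [← ENNReal.ofReal_mul (by positivity)]
      _ = ENNReal.ofReal (4*(H-1/2)^2) * Z := by
          congr 2
          ring
  -- the limit of the majorant
  have hlle : l ≤ nhds (1/2 : ℝ) := nhdsWithin_le_nhds
  have hrho1 : ∀ H : ℝ, 1/2 < H → rho (H/2 + 1/4) 1 = ((2:ℝ) ^ (H + 1/2) - 2)/2 := by
    intro H h1
    have e : 2*(H/2 + 1/4) = H + 1/2 := by ring
    have e0 : (0:ℝ) ^ (H + 1/2) = 0 := Real.zero_rpow (by linarith)
    have e1 : (1:ℝ) ^ (H + 1/2) = (1:ℝ) := Real.one_rpow _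
    have e2 : (1:ℝ)+1 = 2 := by norm_num
    have e3 : (1:ℝ)-1 = 0 := by norm_num
    simp only [rho, Nat.cast_one, e, e2, e3, e0, e1]
    ring
  have hU1 : Tendsto (fun H : ℝ => ENNReal.ofReal ((rho (H/2 + 1/4) 1)^2)) l (nhds 0) := by
    have t0 : Tendsto (fun H : ℝ => H + 1/2) (nhds (1/2 : ℝ)) (nhds 1) := by
      have h := (continuous_add_right (1/2 : ℝ)).tendsto (1/2 : ℝ)
      norm_num at h
      exact h
    have t1 : Tendsto (fun H : ℝ => (2:ℝ) ^ (H + 1/2)) (nhds (1/2 : ℝ)) (nhds 2) := by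
      have hc : ContinuousAt (fun x : ℝ => (2:ℝ) ^ x) 1 :=
        Real.continuousAt_const_rpow (by norm_num)
      have := hc.tendsto.comp t0
      simpa [Real.rpow_one, Function.comp_def] using this
    have t2 : Tendsto (fun H : ℝ => (((2:ℝ) ^ (H + 1/2) - 2)/2)^2) (nhds (1/2 : ℝ)) (nhds 0) := by
      have h := ((t1.sub (tendsto_const_nhds (x := (2:ℝ)))).div_const 2).pow 2
      norm_num at h
      exact h
    have t3 : Tendsto (fun H : ℝ => ENNReal.ofReal ((((2:ℝ) ^ (H + 1/2) - 2)/2)^2)) l (nhds 0) := by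
      have := (ENNReal.continuous_ofReal.tendsto 0).comp (t2.mono_left hlle)
      simpa [Function.comp_def] using this
    refine t3.congr' ?_
    filter_upwards [self_mem_nhdsWithin] with H hH
    rw [hrho1 H hH.1]
  have hU2 : Tendsto (fun H : ℝ => ENNReal.ofReal (4*(H - 1/2)^2) * Z) l (nhds 0) := by
    have t2 : Tendsto (fun H : ℝ => 4*(H - 1/2)^2) (nhds (1/2 : ℝ)) (nhds 0) := by
      have c2 : Continuous (fun H : ℝ => 4*(H - 1/2)^2) := by fun_prop
      have h := c2.tendsto (1/2 : ℝ)
      norm_num at h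
      exact h
    have t3 : Tendsto (fun H : ℝ => ENNReal.ofReal (4*(H - 1/2)^2)) l (nhds 0) := by
      have := (ENNReal.continuous_ofReal.tendsto 0).comp (t2.mono_left hlle)
      simpa [Function.comp_def] using this
    have := ENNReal.Tendsto.mul_const t3 (Or.inr hZtop)
    simpa using this
  have hTt : Tendsto (fun H : ℝ => ∑' k : ℕ, ENNReal.ofReal ((rho (H/2 + 1/4) (k+1))^2))
      l (nhds 0) := by
    have hub : ∀ᶠ H in l, (∑' k : ℕ, ENNReal.ofReal ((rho (H/2 + 1/4) (k+1))^2)) ≤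
        ENNReal.ofReal ((rho (H/2 + 1/4) 1)^2) + ENNReal.ofReal (4*(H - 1/2)^2) * Z := by
      have hev : ∀ᶠ H in l, H < 3/4 :=
        eventually_nhdsWithin_of_eventually_nhds (Filter.Tendsto.eventually_lt_const (by norm_num)
          tendsto_id)
      filter_upwards [self_mem_nhdsWithin, hev] with H hH h34
      exact hTbound H hH.1 h34
    have hzz : Tendsto (fun H : ℝ => ENNReal.ofReal ((rho (H/2 + 1/4) 1)^2) +
        ENNReal.ofReal (4*(H - 1/2)^2) * Z) l (nhds 0) := by
      have := hU1.add hU2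
      simpa using this
    exact tendsto_of_tendsto_of_tendsto_of_le_of_le' tendsto_const_nhds hzz
      (Filter.Eventually.of_forall fun _ => zero_le) hub
  have hBt : Tendsto (fun H : ℝ => ENNReal.ofReal 4 *
      ∑' k : ℕ, ENNReal.ofReal ((rho (H/2 + 1/4) (k+1))^2)) l (nhds 0) := by
    have h := ENNReal.Tendsto.const_mul (a := ENNReal.ofReal 4) hTt
      (Or.inr ENNReal.ofReal_ne_top)
    simpa using h
  have hPt : Tendsto (fun H : ℝ => P {ω | gH σ H < |Y H ω|}) l (nhds 0) := by
    refine tendsto_of_tendsto_of_tendsto_of_le_of_le' tendsto_const_nhds hBt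
      (Filter.Eventually.of_forall fun _ => zero_le) ?_
    filter_upwards [self_mem_nhdsWithin] with H hH
    exact key H hH
  have := (ENNReal.tendsto_toReal (show (0:ℝ≥0∞) ≠ ⊤ by simp)).comp hPt
  simpa [Function.comp_def] using this


end
end

section
/- The random variables 𝒴̄_n^H = Σ_{i=1}^{i_n−1} j_n^H(i)·ξ_i converge to 0 in L² as n → ∞, i.e. E[(𝒴̄_n^H)²] → 0. -/
open MeasureTheory Filter Set ProbabilityTheory

noncomputable section

open intervalIntegral


lemma rpow_diff_eq {H : ℝ} (hH : H ∈ Set.Ioo (1/2 : ℝ) 1) {c : ℝ} (hc : 0 < c) :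
    (c+1) ^ (H - 1/2) - c ^ (H - 1/2) = (H - 1/2) * ∫ t in c..(c+1), t ^ (H - 3/2) := by
  obtain ⟨h1, h2⟩ := hH
  rw [integral_rpow (Or.inl (by linarith))]
  have : H - 3/2 + 1 = H - 1/2 := by ring
  rw [this, mul_comm, div_mul_cancel₀ _ (by linarith : H - 1/2 ≠ 0)]

lemma phi_upper {H : ℝ} (hH : H ∈ Set.Ioo (1/2 : ℝ) 1) {c : ℝ} (hc : 0 < c) :
    (c+1) ^ (H - 1/2) - c ^ (H - 1/2) ≤ (H - 1/2) * c ^ (H - 3/2) := by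
  obtain ⟨h1, h2⟩ := hH
  rw [rpow_diff_eq ⟨h1, h2⟩ hc]
  have hint : ∫ t in c..(c+1), t ^ (H - 3/2) ≤ ∫ t in c..(c+1), c ^ (H - 3/2) := by
    apply intervalIntegral.integral_mono_on (by linarith)
      (intervalIntegrable_rpow' (by linarith)) (intervalIntegrable_const)
    intro t ht
    exact Real.rpow_le_rpow_of_nonpos hc ht.1 (by linarith)
  have := intervalIntegral.integral_const (a := c) (b := c+1) (c ^ (H - 3/2))
  rw [this] at hint
  simp at hint
  nlinarith [hint]

lemma phi_lower {H : ℝ} (hH : H ∈ Set.Ioo (1/2 : ℝ) 1) {c : ℝ} (hc : 0 < c) :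
    (H - 1/2) * (c+1) ^ (H - 3/2) ≤ (c+1) ^ (H - 1/2) - c ^ (H - 1/2) := by
  obtain ⟨h1, h2⟩ := hH
  rw [rpow_diff_eq ⟨h1, h2⟩ hc]
  have hint : ∫ t in c..(c+1), ((c+1) ^ (H - 3/2)) ≤ ∫ t in c..(c+1), t ^ (H - 3/2) := by
    apply intervalIntegral.integral_mono_on (by linarith)
      (intervalIntegrable_const) (intervalIntegrable_rpow' (by linarith))
    intro t ht
    exact Real.rpow_le_rpow_of_nonpos (lt_of_lt_of_le hc ht.1) ht.2 (by linarith)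
  rw [intervalIntegral.integral_const] at hint
  simp at hint
  nlinarith [hint]

/-- phiH rewritten with `c = n - 1 - x`. -/
lemma phiH_eq (H : ℝ) (n : ℕ) (x : ℝ) :
    phiH H n x = ((n : ℝ) - 1 - x + 1) ^ (H - 1/2) - ((n : ℝ) - 1 - x) ^ (H - 1/2) := by
  unfold phiH
  norm_num
  ring_nf

lemma xn_le {H : ℝ} (hH : H ∈ Set.Ioo (1/2 : ℝ) 1) {n : ℕ} (hn : 8 ≤ n) {x : ℝ}
    (hx : x ∈ Set.Ioo (0 : ℝ) ((n : ℝ) - 1))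
    (hanti : StrictAntiOn (gmap H n) (Set.Ioo 0 x)) :
    x ≤ 3 * n / 4 := by
  obtain ⟨h1, h2⟩ := hH
  by_contra hcon
  push_neg at hcon
  have hn8 : (8 : ℝ) ≤ (n : ℝ) := by exact_mod_cast hn
  set a : ℝ := n / 2 with ha
  set b : ℝ := 3 * n / 4 with hb
  have hab : a < b := by rw [ha, hb]; linarith
  have hamem : a ∈ Set.Ioo (0 : ℝ) x := ⟨by positivity, by linarith⟩
  have hbmem : b ∈ Set.Ioo (0 : ℝ) x := ⟨by positivity, hcon⟩
  have hba := hanti hamem hbmem hab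
  -- now show gmap a < gmap b
  -- upper bound at a
  have hca : (0:ℝ) < (n:ℝ) - 1 - a := by rw [ha]; linarith
  have hphia : phiH H n a ≤ (H - 1/2) * ((n:ℝ) - 1 - a) ^ (H - 3/2) := by
    rw [phiH_eq]; exact phi_upper ⟨h1, h2⟩ hca
  have hga : gmap H n a ≤ a ^ (1/2 - H) * ((H - 1/2) * ((3*(n:ℝ)/8)) ^ (H - 3/2)) := by
    unfold gmap
    have h38 : (3*(n:ℝ)/8) ≤ (n:ℝ) - 1 - a := by rw [ha]; linarith
    have hstep : ((n:ℝ) - 1 - a) ^ (H - 3/2) ≤ (3*(n:ℝ)/8) ^ (H - 3/2) :=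
      Real.rpow_le_rpow_of_nonpos (by positivity) h38 (by linarith)
    have hpa : (0:ℝ) ≤ a ^ (1/2 - H) := Real.rpow_nonneg (by positivity) _
    calc a ^ (1/2 - H) * phiH H n a
        ≤ a ^ (1/2 - H) * ((H - 1/2) * ((n:ℝ) - 1 - a) ^ (H - 3/2)) := by
          exact mul_le_mul_of_nonneg_left hphia hpa
      _ ≤ a ^ (1/2 - H) * ((H - 1/2) * ((3*(n:ℝ)/8)) ^ (H - 3/2)) := by
          apply mul_le_mul_of_nonneg_left _ hpa
          apply mul_le_mul_of_nonneg_left hstep (by linarith)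
  -- lower bound at b
  have hcb : (0:ℝ) < (n:ℝ) - 1 - b := by rw [hb]; linarith
  have hcb1 : (n:ℝ) - 1 - b + 1 = (n:ℝ)/4 := by rw [hb]; ring
  have hphib : (H - 1/2) * ((n:ℝ)/4) ^ (H - 3/2) ≤ phiH H n b := by
    rw [phiH_eq, ← hcb1]; exact phi_lower ⟨h1, h2⟩ hcb
  have hgb : b ^ (1/2 - H) * ((H - 1/2) * ((n:ℝ)/4) ^ (H - 3/2)) ≤ gmap H n b := by
    unfold gmap
    exact mul_le_mul_of_nonneg_left hphib (Real.rpow_nonneg (by positivity) _)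
  -- the strict middle inequality
  have hkey : a ^ (1/2 - H) * ((H - 1/2) * ((3*(n:ℝ)/8)) ^ (H - 3/2))
      < b ^ (1/2 - H) * ((H - 1/2) * ((n:ℝ)/4) ^ (H - 3/2)) := by
    have e1 : (3*(n:ℝ)/8) ^ (H - 3/2) = (3/2) ^ (H - 3/2) * ((n:ℝ)/4) ^ (H - 3/2) := by
      rw [← Real.mul_rpow (by norm_num) (by positivity)]
      congr 1
      ring
    have e2 : b ^ (1/2 - H) = (3/2) ^ (1/2 - H) * a ^ (1/2 - H) := by
      rw [← Real.mul_rpow (by norm_num) (by positivity)]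
      congr 1
      rw [ha, hb]; ring
    rw [e1, e2]
    have hlt : (3/2 : ℝ) ^ (H - 3/2) < (3/2 : ℝ) ^ (1/2 - H) :=
      Real.rpow_lt_rpow_of_exponent_lt (by norm_num) (by linarith)
    have hpos : (0:ℝ) < a ^ (1/2 - H) * ((H - 1/2) * ((n:ℝ)/4) ^ (H - 3/2)) := by
      have : (0:ℝ) < a := by rw [ha]; linarith
      have h4 : (0:ℝ) < (n:ℝ)/4 := by linarith
      exact mul_pos (Real.rpow_pos_of_pos this _)
        (mul_pos (by linarith) (Real.rpow_pos_of_pos h4 _))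
    nlinarith [hpos, hlt]
  linarith [hga, hgb, hkey, hba]


/-- bound for the inner integral -/
lemma inner_bound {H : ℝ} (hH : H ∈ Set.Ioo (1/2 : ℝ) 1) {n : ℕ} (hn : 8 ≤ n) {x : ℝ}
    (hx : x ≤ 3 * (n:ℝ) / 4) :
    ‖∫ v in (0 : ℝ)..1, (v + (n:ℝ) - 1) ^ (H - 1/2) * (v + (n:ℝ) - 1 - x) ^ (H - 3/2)‖ ≤
      (n:ℝ) ^ (H - 1/2) * ((n:ℝ)/8) ^ (H - 3/2) := by
  obtain ⟨h1, h2⟩ := hH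
  have hn8 : (8 : ℝ) ≤ (n : ℝ) := by exact_mod_cast hn
  have hb := intervalIntegral.norm_integral_le_of_norm_le_const
    (C := (n:ℝ) ^ (H - 1/2) * ((n:ℝ)/8) ^ (H - 3/2))
    (f := fun v => (v + (n:ℝ) - 1) ^ (H - 1/2) * (v + (n:ℝ) - 1 - x) ^ (H - 3/2))
    (a := 0) (b := 1) ?_
  · simpa using hb
  · intro v hv
    rw [Set.uIoc_of_le (by norm_num : (0:ℝ) ≤ 1)] at hv
    obtain ⟨hv0, hv1⟩ := hv
    have hb1 : (0:ℝ) ≤ v + (n:ℝ) - 1 := by linarith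
    have hb2 : (n:ℝ)/8 ≤ v + (n:ℝ) - 1 - x := by linarith
    have hf1 : (v + (n:ℝ) - 1) ^ (H - 1/2) ≤ (n:ℝ) ^ (H - 1/2) :=
      Real.rpow_le_rpow hb1 (by linarith) (by linarith)
    have hf2 : (v + (n:ℝ) - 1 - x) ^ (H - 3/2) ≤ ((n:ℝ)/8) ^ (H - 3/2) :=
      Real.rpow_le_rpow_of_nonpos (by linarith) hb2 (by linarith)
    rw [norm_mul, Real.norm_eq_abs, Real.norm_eq_abs, abs_of_nonneg (Real.rpow_nonneg hb1 _),
      abs_of_nonneg (Real.rpow_nonneg (by linarith : (0:ℝ) ≤ v + (n:ℝ) - 1 - x) _)]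
    exact mul_le_mul hf1 hf2 (Real.rpow_nonneg (by linarith) _) (Real.rpow_nonneg (by linarith) _)

lemma CH_nonneg {H : ℝ} (hH : H ∈ Set.Ioo (1/2 : ℝ) 1) : 0 ≤ CH H :=
  mul_nonneg (Real.sqrt_nonneg _) (by linarith [hH.1])

/-- bound for `jH` when `i ≥ 2` -/
lemma jH_bound_ge_two {σ H : ℝ} (hH : H ∈ Set.Ioo (1/2 : ℝ) 1) (hσ : 0 < σ) {n i : ℕ}
    (hn : 8 ≤ n) (hi : 2 ≤ i) (hi' : (i:ℝ) ≤ 3 * (n:ℝ) / 4) :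
    |jH σ H n i| ≤ σ * CH H * ((n:ℝ) ^ (H - 1/2) * ((n:ℝ)/8) ^ (H - 3/2)) *
      ((i:ℝ) - 1) ^ (1/2 - H) := by
  obtain ⟨h1, h2⟩ := hH
  have hi2 : (2:ℝ) ≤ (i:ℝ) := by exact_mod_cast hi
  have hsc : (0:ℝ) ≤ σ * CH H := mul_nonneg hσ.le (CH_nonneg ⟨h1, h2⟩)
  have main : ‖∫ x in ((i:ℝ) - 1)..(i:ℝ), x ^ (1/2 - H) *
      ∫ v in (0 : ℝ)..1, (v + (n:ℝ) - 1) ^ (H - 1/2) * (v + (n:ℝ) - 1 - x) ^ (H - 3/2)‖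
      ≤ ((n:ℝ) ^ (H - 1/2) * ((n:ℝ)/8) ^ (H - 3/2)) * ((i:ℝ) - 1) ^ (1/2 - H) := by
    have hb := intervalIntegral.norm_integral_le_of_norm_le_const
      (C := ((n:ℝ) ^ (H - 1/2) * ((n:ℝ)/8) ^ (H - 3/2)) * ((i:ℝ) - 1) ^ (1/2 - H))
      (f := fun x => x ^ (1/2 - H) *
        ∫ v in (0 : ℝ)..1, (v + (n:ℝ) - 1) ^ (H - 1/2) * (v + (n:ℝ) - 1 - x) ^ (H - 3/2))
      (a := (i:ℝ) - 1) (b := (i:ℝ)) ?_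
    · have e : |(i:ℝ) - ((i:ℝ) - 1)| = 1 := by norm_num
      rw [e, mul_one] at hb
      exact hb
    · intro x hx
      rw [Set.uIoc_of_le (by linarith : (i:ℝ) - 1 ≤ (i:ℝ))] at hx
      obtain ⟨hx0, hx1⟩ := hx
      have hxpos : (0:ℝ) < x := by linarith
      rw [norm_mul, Real.norm_eq_abs (x ^ (1/2 - H)), abs_of_nonneg (Real.rpow_nonneg hxpos.le _)]
      have hrx : x ^ (1/2 - H) ≤ ((i:ℝ) - 1) ^ (1/2 - H) :=
        Real.rpow_le_rpow_of_nonpos (by linarith) hx0.le (by linarith)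
      have hinner := inner_bound ⟨h1, h2⟩ hn (by linarith : x ≤ 3 * (n:ℝ) / 4)
      calc x ^ (1/2 - H) * ‖∫ v in (0 : ℝ)..1, (v + (n:ℝ) - 1) ^ (H - 1/2) * (v + (n:ℝ) - 1 - x) ^ (H - 3/2)‖
          ≤ ((i:ℝ) - 1) ^ (1/2 - H) * ((n:ℝ) ^ (H - 1/2) * ((n:ℝ)/8) ^ (H - 3/2)) :=
            mul_le_mul hrx hinner (norm_nonneg _) (Real.rpow_nonneg (by linarith) _)
        _ = ((n:ℝ) ^ (H - 1/2) * ((n:ℝ)/8) ^ (H - 3/2)) * ((i:ℝ) - 1) ^ (1/2 - H) := by ring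
  unfold jH
  rw [abs_mul, abs_of_nonneg hsc, ← Real.norm_eq_abs]
  calc σ * CH H * ‖∫ x in ((i:ℝ) - 1)..(i:ℝ), x ^ (1/2 - H) *
        ∫ v in (0 : ℝ)..1, (v + (n:ℝ) - 1) ^ (H - 1/2) * (v + (n:ℝ) - 1 - x) ^ (H - 3/2)‖
      ≤ σ * CH H * (((n:ℝ) ^ (H - 1/2) * ((n:ℝ)/8) ^ (H - 3/2)) * ((i:ℝ) - 1) ^ (1/2 - H)) :=
        mul_le_mul_of_nonneg_left main hsc
    _ = σ * CH H * ((n:ℝ) ^ (H - 1/2) * ((n:ℝ)/8) ^ (H - 3/2)) * ((i:ℝ) - 1) ^ (1/2 - H) := by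
        ring

/-- bound for `jH` when `i = 1` -/
lemma jH_bound_one {σ H : ℝ} (hH : H ∈ Set.Ioo (1/2 : ℝ) 1) (hσ : 0 < σ) {n : ℕ}
    (hn : 8 ≤ n) :
    |jH σ H n 1| ≤ σ * CH H * ((n:ℝ) ^ (H - 1/2) * ((n:ℝ)/8) ^ (H - 3/2)) * 2 := by
  obtain ⟨h1, h2⟩ := hH
  have hn8 : (8 : ℝ) ≤ (n : ℝ) := by exact_mod_cast hn
  have hsc : (0:ℝ) ≤ σ * CH H := mul_nonneg hσ.le (CH_nonneg ⟨h1, h2⟩)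
  set B : ℝ := (n:ℝ) ^ (H - 1/2) * ((n:ℝ)/8) ^ (H - 3/2) with hB
  have hBpos : 0 ≤ B := by
    rw [hB]
    exact mul_nonneg (Real.rpow_nonneg (by linarith) _) (Real.rpow_nonneg (by linarith) _)
  have hgint : IntegrableOn (fun x : ℝ => B * x ^ (1/2 - H)) (Set.Ioc (0:ℝ) 1) := by
    have := (intervalIntegrable_rpow' (a := (0:ℝ)) (b := 1) (r := 1/2 - H) (by linarith)).const_mul B
    rwa [intervalIntegrable_iff_integrableOn_Ioc_of_le (by norm_num : (0:ℝ) ≤ 1)] at this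
  have key : ∀ g : ℝ → ℝ, (∀ x ∈ Set.Ioc (0:ℝ) 1, ‖g x‖ ≤ B * x ^ (1/2 - H)) →
      |∫ x in (0:ℝ)..1, g x| ≤ ∫ x in Set.Ioc (0:ℝ) 1, B * x ^ (1/2 - H) := by
    intro g hg
    rw [intervalIntegral.integral_of_le (by norm_num : (0:ℝ) ≤ 1), ← Real.norm_eq_abs]
    refine le_trans (norm_integral_le_integral_norm g) ?_
    apply integral_mono_of_nonneg (Eventually.of_forall fun x => norm_nonneg _) hgint
    filter_upwards [self_mem_ae_restrict measurableSet_Ioc] with x hx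
    exact hg x hx
  have main : |∫ x in (0:ℝ)..1, x ^ (1/2 - H) *
      ∫ v in (0 : ℝ)..1, (v + (n:ℝ) - 1) ^ (H - 1/2) * (v + (n:ℝ) - 1 - x) ^ (H - 3/2)|
      ≤ ∫ x in Set.Ioc (0:ℝ) 1, B * x ^ (1/2 - H) := by
    apply key
    intro x hx
    obtain ⟨hx0, hx1⟩ := hx
    rw [norm_mul, Real.norm_eq_abs (x ^ (1/2 - H)), abs_of_nonneg (Real.rpow_nonneg hx0.le _)]
    have hinner := inner_bound ⟨h1, h2⟩ hn (by linarith : x ≤ 3 * (n:ℝ) / 4)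
    calc x ^ (1/2 - H) * ‖∫ v in (0 : ℝ)..1, (v + (n:ℝ) - 1) ^ (H - 1/2) * (v + (n:ℝ) - 1 - x) ^ (H - 3/2)‖
        ≤ x ^ (1/2 - H) * B := mul_le_mul_of_nonneg_left hinner (Real.rpow_nonneg hx0.le _)
      _ = B * x ^ (1/2 - H) := by ring
  have hval : ∫ x in Set.Ioc (0:ℝ) 1, B * x ^ (1/2 - H) = B * (1 / (3/2 - H)) := by
    rw [MeasureTheory.integral_const_mul]
    congr 1
    rw [← intervalIntegral.integral_of_le (by norm_num : (0:ℝ) ≤ 1)]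
    rw [integral_rpow (Or.inl (by linarith))]
    rw [Real.one_rpow, Real.zero_rpow (by intro h; norm_num at h; linarith)]
    have e : 1/2 - H + 1 = 3/2 - H := by ring
    rw [e]
    norm_num
  have hle2 : B * (1 / (3/2 - H)) ≤ B * 2 := by
    apply mul_le_mul_of_nonneg_left _ hBpos
    rw [div_le_iff₀ (by linarith : (0:ℝ) < 3/2 - H)]
    linarith
  unfold jH
  rw [abs_mul, abs_of_nonneg hsc]
  have e0 : ((1:ℕ):ℝ) - 1 = 0 := by norm_num
  have e1 : ((1:ℕ):ℝ) = 1 := by norm_num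
  rw [e0, e1]
  calc σ * CH H * |∫ x in (0:ℝ)..1, x ^ (1/2 - H) *
        ∫ v in (0 : ℝ)..1, (v + (n:ℝ) - 1) ^ (H - 1/2) * (v + (n:ℝ) - 1 - x) ^ (H - 3/2)|
      ≤ σ * CH H * (B * 2) :=
        mul_le_mul_of_nonneg_left (le_trans main (le_trans (le_of_eq hval) hle2)) hsc
    _ = σ * CH H * B * 2 := by ring


lemma sum_rpow_le {H : ℝ} (hH : H ∈ Set.Ioo (1/2 : ℝ) 1) (M : ℕ) :
    ∑ i ∈ Finset.range M, ((i:ℝ) + 1) ^ (1 - 2*H) ≤ (M:ℝ) ^ (2 - 2*H) / (2 - 2*H) := by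
  obtain ⟨h1, h2⟩ := hH
  have hterm : ∀ i : ℕ, ((i:ℝ) + 1) ^ (1 - 2*H) ≤ ∫ x in (i:ℝ)..((i:ℝ)+1), x ^ (1 - 2*H) := by
    intro i
    have hint : IntegrableOn (fun x : ℝ => x ^ (1 - 2*H)) (Set.Ioc (i:ℝ) ((i:ℝ)+1)) := by
      have := intervalIntegrable_rpow' (a := (i:ℝ)) (b := (i:ℝ)+1) (r := 1 - 2*H) (by linarith)
      rwa [intervalIntegrable_iff_integrableOn_Ioc_of_le (by linarith)] at this
    rw [intervalIntegral.integral_of_le (by linarith : (i:ℝ) ≤ (i:ℝ)+1)]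
    have e : ((i:ℝ) + 1) ^ (1 - 2*H) = ∫ _ in Set.Ioc (i:ℝ) ((i:ℝ)+1), ((i:ℝ) + 1) ^ (1 - 2*H) := by
      rw [MeasureTheory.setIntegral_const, measureReal_def, Real.volume_Ioc]
      norm_num
    rw [e]
    apply integral_mono_of_nonneg
      (Eventually.of_forall fun x => Real.rpow_nonneg (by positivity) _) hint
    filter_upwards [self_mem_ae_restrict measurableSet_Ioc] with x hx
    obtain ⟨hx0, hx1⟩ := hx
    have hxpos : (0:ℝ) < x := lt_of_le_of_lt (Nat.cast_nonneg i) hx0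
    exact Real.rpow_le_rpow_of_nonpos hxpos hx1 (by linarith)
  calc ∑ i ∈ Finset.range M, ((i:ℝ) + 1) ^ (1 - 2*H)
      ≤ ∑ i ∈ Finset.range M, ∫ x in (i:ℝ)..((i:ℝ)+1), x ^ (1 - 2*H) :=
        Finset.sum_le_sum fun i _ => hterm i
    _ = ∫ x in (0:ℝ)..(M:ℝ), x ^ (1 - 2*H) := by
        have := intervalIntegral.sum_integral_adjacent_intervals (μ := volume)
          (f := fun x => x ^ (1 - 2*H)) (a := fun k : ℕ => (k:ℝ)) (n := M)
          (fun k _ => by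
            have := intervalIntegrable_rpow' (a := (k:ℝ)) (b := ((k+1:ℕ):ℝ)) (r := 1 - 2*H)
              (by linarith)
            exact this)
        push_cast at this ⊢
        rw [← this]
    _ = (M:ℝ) ^ (2 - 2*H) / (2 - 2*H) := by
        rw [integral_rpow (Or.inl (by linarith))]
        rw [Real.zero_rpow (by intro h; norm_num at h; linarith)]
        have e : 1 - 2*H + 1 = 2 - 2*H := by ring
        rw [e]
        ring

lemma sum_sq_le {σ H : ℝ} (hH : H ∈ Set.Ioo (1/2 : ℝ) 1) (hσ : 0 < σ) {n m : ℕ}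
    (hn : 8 ≤ n) (hm : (m:ℝ) ≤ 3 * (n:ℝ) / 4) :
    ∑ i ∈ Finset.range m, (jH σ H n (i+1)) ^ 2 ≤
      (σ * CH H) ^ 2 * 8 ^ ((3:ℝ) - 2*H) * (4 + 1/(2 - 2*H)) * (n:ℝ) ^ (2*H - 2) := by
  obtain ⟨h1, h2⟩ := hH
  have hn8 : (8 : ℝ) ≤ (n : ℝ) := by exact_mod_cast hn
  have hnpos : (0:ℝ) < (n:ℝ) := by linarith
  set B : ℝ := (n:ℝ) ^ (H - 1/2) * ((n:ℝ)/8) ^ (H - 3/2) with hB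
  set K : ℝ := σ * CH H with hK
  have hKpos : 0 ≤ K := mul_nonneg hσ.le (CH_nonneg ⟨h1, h2⟩)
  have hBnn : 0 ≤ B := mul_nonneg (Real.rpow_nonneg hnpos.le _) (Real.rpow_nonneg (by linarith) _)
  -- step 1: bound the sum by (K*B)^2 * (4 + ∑ (i+1)^(1-2H))
  have step1 : ∑ i ∈ Finset.range m, (jH σ H n (i+1)) ^ 2 ≤
      (K * B) ^ 2 * (4 + (n:ℝ) ^ (2 - 2*H) / (2 - 2*H)) := by
    rcases Nat.eq_zero_or_pos m with hm0 | hmpos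
    · rw [hm0]
      simp only [Finset.range_zero, Finset.sum_empty]
      have : (0:ℝ) ≤ (n:ℝ) ^ (2 - 2*H) / (2 - 2*H) := by
        apply div_nonneg (Real.rpow_nonneg hnpos.le _) (by linarith)
      positivity
    · obtain ⟨M, rfl⟩ : ∃ M, m = M + 1 := ⟨m - 1, (Nat.succ_pred_eq_of_pos hmpos).symm⟩
      rw [Finset.sum_range_succ']
      have hbound0 : (jH σ H n (0+1)) ^ 2 ≤ (K * B) ^ 2 * 4 := by
        have h := jH_bound_one ⟨h1, h2⟩ hσ hn
        have h' : |jH σ H n 1| ≤ K * B * 2 := by rw [hK, hB]; convert h using 2 <;> ring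
        calc (jH σ H n (0+1)) ^ 2 = |jH σ H n 1| * |jH σ H n 1| := by
              rw [abs_mul_abs_self]; ring
          _ ≤ (K * B * 2) * (K * B * 2) := mul_self_le_mul_self (abs_nonneg _) h'
          _ = (K * B) ^ 2 * 4 := by ring
      have hboundi : ∀ i ∈ Finset.range M, (jH σ H n (i+1+1)) ^ 2 ≤
          (K * B) ^ 2 * ((i:ℝ) + 1) ^ (1 - 2*H) := by
        intro i hi
        have hiM : i < M := Finset.mem_range.mp hi
        have hile : ((i:ℕ) + 1 + 1 : ℕ) ≤ M + 1 := by omega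
        have hile' : ((i + 1 + 1 : ℕ) : ℝ) ≤ 3 * (n:ℝ) / 4 := by
          calc ((i + 1 + 1 : ℕ) : ℝ) ≤ ((M + 1 : ℕ) : ℝ) := by exact_mod_cast hile
            _ ≤ 3 * (n:ℝ) / 4 := hm
        have h := jH_bound_ge_two ⟨h1, h2⟩ hσ hn (by omega : 2 ≤ i + 1 + 1) hile'
        have hcast : ((i + 1 + 1 : ℕ) : ℝ) - 1 = (i:ℝ) + 1 := by push_cast; ring
        rw [hcast] at h
        have hsq : (((i:ℝ) + 1) ^ ((1:ℝ)/2 - H)) * (((i:ℝ) + 1) ^ ((1:ℝ)/2 - H)) =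
            ((i:ℝ) + 1) ^ (1 - 2*H) := by
          rw [← Real.rpow_add (by positivity)]
          congr 1
          ring
        calc (jH σ H n (i+1+1)) ^ 2 = |jH σ H n (i+1+1)| * |jH σ H n (i+1+1)| := by
              rw [abs_mul_abs_self]; ring
          _ ≤ (K * B * ((i:ℝ) + 1) ^ ((1:ℝ)/2 - H)) * (K * B * ((i:ℝ) + 1) ^ ((1:ℝ)/2 - H)) := by
              apply mul_self_le_mul_self (abs_nonneg _)
              exact h
          _ = (K * B) ^ 2 * ((((i:ℝ) + 1) ^ ((1:ℝ)/2 - H)) * (((i:ℝ) + 1) ^ ((1:ℝ)/2 - H))) := by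
              ring
          _ = (K * B) ^ 2 * ((i:ℝ) + 1) ^ (1 - 2*H) := by rw [hsq]
      calc ∑ i ∈ Finset.range M, (jH σ H n (i+1+1)) ^ 2 + (jH σ H n (0+1)) ^ 2
          ≤ ∑ i ∈ Finset.range M, (K * B) ^ 2 * ((i:ℝ) + 1) ^ (1 - 2*H) + (K * B) ^ 2 * 4 :=
            add_le_add (Finset.sum_le_sum hboundi) hbound0
        _ = (K * B) ^ 2 * (∑ i ∈ Finset.range M, ((i:ℝ) + 1) ^ (1 - 2*H)) + (K * B) ^ 2 * 4 := by
            rw [Finset.mul_sum]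
        _ ≤ (K * B) ^ 2 * ((M:ℝ) ^ (2 - 2*H) / (2 - 2*H)) + (K * B) ^ 2 * 4 := by
            apply add_le_add_left
            exact mul_le_mul_of_nonneg_left (sum_rpow_le ⟨h1, h2⟩ M) (sq_nonneg _)
        _ ≤ (K * B) ^ 2 * ((n:ℝ) ^ (2 - 2*H) / (2 - 2*H)) + (K * B) ^ 2 * 4 := by
            apply add_le_add_left
            apply mul_le_mul_of_nonneg_left _ (sq_nonneg _)
            have hMn : ((M:ℕ):ℝ) ≤ (n:ℝ) := by push_cast at hm ⊢; linarith
            exact div_le_div_of_nonneg_right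
              (Real.rpow_le_rpow (Nat.cast_nonneg M) hMn (by linarith)) (by linarith)
        _ = (K * B) ^ 2 * (4 + (n:ℝ) ^ (2 - 2*H) / (2 - 2*H)) := by ring
  have hn8pos : (0:ℝ) < (n:ℝ)/8 := by linarith
  have e1 : (n:ℝ) ^ (H - 1/2) * (n:ℝ) ^ (H - 1/2) = (n:ℝ) ^ (2*H - 1) := by
    rw [← Real.rpow_add hnpos]; congr 1; ring
  have e2 : ((n:ℝ)/8) ^ (H - 3/2) * ((n:ℝ)/8) ^ (H - 3/2) = ((n:ℝ)/8) ^ (2*H - 3) := by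
    rw [← Real.rpow_add hn8pos]; congr 1; ring
  have e3 : ((n:ℝ)/8) ^ (2*H - 3) = (n:ℝ) ^ (2*H - 3) * 8 ^ ((3:ℝ) - 2*H) := by
    rw [Real.div_rpow hnpos.le (by norm_num), div_eq_mul_inv,
      ← Real.rpow_neg (by norm_num : (0:ℝ) ≤ 8)]
    congr 1
    ring
  have e4 : (n:ℝ) ^ (2*H - 1) * (n:ℝ) ^ (2*H - 3) = (n:ℝ) ^ (4*H - 4) := by
    rw [← Real.rpow_add hnpos]; congr 1; ring
  have hB2 : B ^ 2 = (n:ℝ) ^ (4*H - 4) * 8 ^ ((3:ℝ) - 2*H) := by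
    calc B ^ 2 = ((n:ℝ) ^ (H - 1/2) * (n:ℝ) ^ (H - 1/2)) *
          (((n:ℝ)/8) ^ (H - 3/2) * ((n:ℝ)/8) ^ (H - 3/2)) := by rw [hB]; ring
      _ = (n:ℝ) ^ (2*H - 1) * ((n:ℝ)/8) ^ (2*H - 3) := by rw [e1, e2]
      _ = (n:ℝ) ^ (2*H - 1) * ((n:ℝ) ^ (2*H - 3) * 8 ^ ((3:ℝ) - 2*H)) := by rw [e3]
      _ = ((n:ℝ) ^ (2*H - 1) * (n:ℝ) ^ (2*H - 3)) * 8 ^ ((3:ℝ) - 2*H) := by ring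
      _ = (n:ℝ) ^ (4*H - 4) * 8 ^ ((3:ℝ) - 2*H) := by rw [e4]
  have h5 : (n:ℝ) ^ (4*H - 4) * (n:ℝ) ^ (2 - 2*H) = (n:ℝ) ^ (2*H - 2) := by
    rw [← Real.rpow_add hnpos]; congr 1; ring
  have h6 : (n:ℝ) ^ (4*H - 4) ≤ (n:ℝ) ^ (2*H - 2) :=
    Real.rpow_le_rpow_of_exponent_le (by linarith) (by linarith)
  have hKB2 : (K * B) ^ 2 = K ^ 2 * ((n:ℝ) ^ (4*H - 4) * 8 ^ ((3:ℝ) - 2*H)) := by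
    rw [mul_pow, hB2]
  refine le_trans step1 ?_
  calc (K * B) ^ 2 * (4 + (n:ℝ) ^ (2 - 2*H) / (2 - 2*H))
      = K ^ 2 * 8 ^ ((3:ℝ) - 2*H) *
        (4 * (n:ℝ) ^ (4*H - 4) + ((n:ℝ) ^ (4*H - 4) * (n:ℝ) ^ (2 - 2*H)) * (1 / (2 - 2*H))) := by
        rw [hKB2]; ring
    _ = K ^ 2 * 8 ^ ((3:ℝ) - 2*H) *
        (4 * (n:ℝ) ^ (4*H - 4) + (n:ℝ) ^ (2*H - 2) * (1 / (2 - 2*H))) := by rw [h5]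
    _ ≤ K ^ 2 * 8 ^ ((3:ℝ) - 2*H) *
        (4 * (n:ℝ) ^ (2*H - 2) + (n:ℝ) ^ (2*H - 2) * (1 / (2 - 2*H))) := by
        apply mul_le_mul_of_nonneg_left _
          (mul_nonneg (sq_nonneg K) (Real.rpow_nonneg (by norm_num) _))
        exact add_le_add_left (mul_le_mul_of_nonneg_left h6 (by norm_num)) _
    _ = K ^ 2 * 8 ^ ((3:ℝ) - 2*H) * (4 + 1/(2 - 2*H)) * (n:ℝ) ^ (2*H - 2) := by ring

lemma tendsto_sum_sq {σ H : ℝ} (hH : H ∈ Set.Ioo (1/2 : ℝ) 1) (hσ : 0 < σ)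
    (xn : ℕ → ℝ)
    (hxn : ∀ n : ℕ, 1 < n → xn n ∈ Set.Ioo (0 : ℝ) ((n : ℝ) - 1) ∧
      StrictAntiOn (gmap H n) (Set.Ioo 0 (xn n)) ∧
      StrictMonoOn (gmap H n) (Set.Ioo (xn n) ((n : ℝ) - 1))) :
    Tendsto (fun n => ∑ i ∈ Finset.range ⌊xn n⌋₊, (jH σ H n (i+1)) ^ 2) atTop (nhds 0) := by
  obtain ⟨h1, h2⟩ := hH
  set C : ℝ := (σ * CH H) ^ 2 * 8 ^ ((3:ℝ) - 2*H) * (4 + 1/(2 - 2*H)) with hC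
  apply squeeze_zero' (g := fun n : ℕ => C * (n:ℝ) ^ (2*H - 2))
  · exact Eventually.of_forall fun n => Finset.sum_nonneg fun i _ => sq_nonneg _
  · rw [eventually_atTop]
    refine ⟨8, fun n hn => ?_⟩
    obtain ⟨hmem, hanti, _⟩ := hxn n (by omega)
    have hx34 : xn n ≤ 3 * (n:ℝ) / 4 := xn_le ⟨h1, h2⟩ hn hmem hanti
    have hm : ((⌊xn n⌋₊ : ℕ) : ℝ) ≤ 3 * (n:ℝ) / 4 :=
      le_trans (Nat.floor_le hmem.1.le) hx34
    calc ∑ i ∈ Finset.range ⌊xn n⌋₊, (jH σ H n (i+1)) ^ 2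
        ≤ (σ * CH H) ^ 2 * 8 ^ ((3:ℝ) - 2*H) * (4 + 1/(2 - 2*H)) * (n:ℝ) ^ (2*H - 2) :=
          sum_sq_le ⟨h1, h2⟩ hσ hn hm
      _ = C * (n:ℝ) ^ (2*H - 2) := by rw [hC]
  · have hbase : Tendsto (fun x : ℝ => x ^ (-(2 - 2*H))) atTop (nhds 0) :=
      tendsto_rpow_neg_atTop (by linarith)
    have hexp : (fun x : ℝ => x ^ (-(2 - 2*H))) = fun x : ℝ => x ^ (2*H - 2) := by
      funext x; congr 1; ring
    rw [hexp] at hbase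
    have hnat : Tendsto (fun n : ℕ => ((n:ℝ)) ^ (2*H - 2)) atTop (nhds 0) :=
      hbase.comp tendsto_natCast_atTop_atTop
    have := hnat.const_mul C
    simpa using this


lemma xi_ae_pm {Ω : Type} [MeasurableSpace Ω] (P : Measure Ω) [IsProbabilityMeasure P]
    (ξ : ℕ → Ω → ℝ) (hξmeas : ∀ i, Measurable (ξ i))
    (hξdist : ∀ i, P {ω | ξ i ω = 1} = 1 / 2 ∧ P {ω | ξ i ω = -1} = 1 / 2) (i : ℕ) :
    ∀ᵐ ω ∂P, ξ i ω = 1 ∨ ξ i ω = -1 := by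
  have hA : MeasurableSet {ω | ξ i ω = 1} := (hξmeas i) (measurableSet_singleton 1)
  have hB : MeasurableSet {ω | ξ i ω = -1} := (hξmeas i) (measurableSet_singleton (-1))
  have hdisj : Disjoint {ω | ξ i ω = 1} {ω | ξ i ω = -1} := by
    rw [Set.disjoint_left]
    intro ω h1 h2
    simp only [Set.mem_setOf_eq] at h1 h2
    rw [h1] at h2
    norm_num at h2
  have hunion : P ({ω | ξ i ω = 1} ∪ {ω | ξ i ω = -1}) = 1 := by
    rw [measure_union hdisj hB, (hξdist i).1, (hξdist i).2]
    exact ENNReal.add_halves 1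
  have hcompl : P ({ω | ξ i ω = 1} ∪ {ω | ξ i ω = -1})ᶜ = 0 := by
    rw [prob_compl_eq_zero_iff (hA.union hB)]
    exact hunion
  filter_upwards [MeasureTheory.measure_eq_zero_iff_ae_notMem.mp hcompl] with ω hω
  have hmem : ω ∈ {ω | ξ i ω = 1} ∪ {ω | ξ i ω = -1} := Set.not_notMem.mp hω
  rcases hmem with h | h
  · exact Or.inl h
  · exact Or.inr h

lemma xi_integrable {Ω : Type} [MeasurableSpace Ω] (P : Measure Ω) [IsProbabilityMeasure P]
    (ξ : ℕ → Ω → ℝ) (hξmeas : ∀ i, Measurable (ξ i))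
    (hξdist : ∀ i, P {ω | ξ i ω = 1} = 1 / 2 ∧ P {ω | ξ i ω = -1} = 1 / 2) (i : ℕ) :
    Integrable (ξ i) P := by
  apply Integrable.mono' (integrable_const (1:ℝ)) (hξmeas i).aestronglyMeasurable
  filter_upwards [xi_ae_pm P ξ hξmeas hξdist i] with ω hω
  rcases hω with h | h <;> rw [h] <;> norm_num

lemma xi_integral_zero {Ω : Type} [MeasurableSpace Ω] (P : Measure Ω) [IsProbabilityMeasure P]
    (ξ : ℕ → Ω → ℝ) (hξmeas : ∀ i, Measurable (ξ i))
    (hξdist : ∀ i, P {ω | ξ i ω = 1} = 1 / 2 ∧ P {ω | ξ i ω = -1} = 1 / 2) (i : ℕ) :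
    ∫ ω, ξ i ω ∂P = 0 := by
  set A := {ω | ξ i ω = 1} with hAdef
  set B := {ω | ξ i ω = -1} with hBdef
  have hA : MeasurableSet A := (hξmeas i) (measurableSet_singleton 1)
  have hB : MeasurableSet B := (hξmeas i) (measurableSet_singleton (-1))
  have hcong : ξ i =ᵐ[P] fun ω =>
      Set.indicator A (fun _ => (1:ℝ)) ω + Set.indicator B (fun _ => (-1:ℝ)) ω := by
    filter_upwards [xi_ae_pm P ξ hξmeas hξdist i] with ω hω
    rcases hω with h | h
    · have hA' : ω ∈ A := h
      have hB' : ω ∉ B := by simp only [hBdef, Set.mem_setOf_eq, h]; norm_num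
      rw [Set.indicator_of_mem hA', Set.indicator_of_notMem hB', h]
      norm_num
    · have hA' : ω ∉ A := by simp only [hAdef, Set.mem_setOf_eq, h]; norm_num
      have hB' : ω ∈ B := h
      rw [Set.indicator_of_notMem hA', Set.indicator_of_mem hB', h]
      norm_num
  rw [integral_congr_ae hcong, integral_add ((integrable_const _).indicator hA)
    ((integrable_const _).indicator hB), integral_indicator_const _ hA,
    integral_indicator_const _ hB, measureReal_def, measureReal_def, (hξdist i).1, (hξdist i).2]
  simp

lemma xi_prod_integrable {Ω : Type} [MeasurableSpace Ω] (P : Measure Ω) [IsProbabilityMeasure P]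
    (ξ : ℕ → Ω → ℝ) (hξmeas : ∀ i, Measurable (ξ i))
    (hξdist : ∀ i, P {ω | ξ i ω = 1} = 1 / 2 ∧ P {ω | ξ i ω = -1} = 1 / 2) (i j : ℕ) :
    Integrable (fun ω => ξ i ω * ξ j ω) P := by
  apply Integrable.mono' (integrable_const (1:ℝ))
    ((hξmeas i).mul (hξmeas j)).aestronglyMeasurable
  filter_upwards [xi_ae_pm P ξ hξmeas hξdist i, xi_ae_pm P ξ hξmeas hξdist j] with ω h1 h2
  rcases h1 with h | h <;> rcases h2 with h' | h' <;> rw [Pi.mul_apply, h, h'] <;> norm_num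

lemma xi_prod_integral {Ω : Type} [MeasurableSpace Ω] (P : Measure Ω) [IsProbabilityMeasure P]
    (ξ : ℕ → Ω → ℝ) (hξmeas : ∀ i, Measurable (ξ i))
    (hξindep : iIndepFun ξ P)
    (hξdist : ∀ i, P {ω | ξ i ω = 1} = 1 / 2 ∧ P {ω | ξ i ω = -1} = 1 / 2) (i j : ℕ) :
    ∫ ω, ξ i ω * ξ j ω ∂P = if i = j then 1 else 0 := by
  by_cases hij : i = j
  · rw [if_pos hij, ← hij]
    have hsq : (fun ω => ξ i ω * ξ i ω) =ᵐ[P] fun _ => (1:ℝ) := by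
      filter_upwards [xi_ae_pm P ξ hξmeas hξdist i] with ω hω
      rcases hω with h | h <;> rw [h] <;> norm_num
    rw [integral_congr_ae hsq]
    simp
  · rw [if_neg hij]
    have hind : IndepFun (ξ i) (ξ j) P := hξindep.indepFun hij
    have := hind.integral_mul_eq_mul_integral (xi_integrable P ξ hξmeas hξdist i).aestronglyMeasurable
      (xi_integrable P ξ hξmeas hξdist j).aestronglyMeasurable
    have e : ∫ ω, ξ i ω * ξ j ω ∂P = ∫ ω, (ξ i * ξ j) ω ∂P := rfl
    rw [e, this, xi_integral_zero P ξ hξmeas hξdist i]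
    ring

lemma expectation_sq {Ω : Type} [MeasurableSpace Ω] (P : Measure Ω) [IsProbabilityMeasure P]
    (ξ : ℕ → Ω → ℝ) (hξmeas : ∀ i, Measurable (ξ i))
    (hξindep : iIndepFun ξ P)
    (hξdist : ∀ i, P {ω | ξ i ω = 1} = 1 / 2 ∧ P {ω | ξ i ω = -1} = 1 / 2)
    (c : ℕ → ℝ) (m : ℕ) :
    ∫ ω, (∑ i ∈ Finset.range m, c i * ξ i ω) ^ 2 ∂P = ∑ i ∈ Finset.range m, (c i) ^ 2 := by
  have expand : ∀ ω, (∑ i ∈ Finset.range m, c i * ξ i ω) ^ 2 =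
      ∑ i ∈ Finset.range m, ∑ j ∈ Finset.range m, (c i * c j) * (ξ i ω * ξ j ω) := by
    intro ω
    rw [sq, Finset.sum_mul_sum]
    apply Finset.sum_congr rfl
    intro i _
    apply Finset.sum_congr rfl
    intro j _
    ring
  simp_rw [expand]
  rw [integral_finset_sum _ (fun i _ => integrable_finset_sum _ (fun j _ =>
    ((xi_prod_integrable P ξ hξmeas hξdist i j).const_mul _)))]
  have : ∀ i ∈ Finset.range m,
      (∫ ω, ∑ j ∈ Finset.range m, (c i * c j) * (ξ i ω * ξ j ω) ∂P) = (c i) ^ 2 := by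
    intro i hi
    rw [integral_finset_sum _ (fun j _ =>
      ((xi_prod_integrable P ξ hξmeas hξdist i j).const_mul _))]
    have hterm : ∀ j ∈ Finset.range m,
        (∫ ω, (c i * c j) * (ξ i ω * ξ j ω) ∂P) =
          if i = j then c i ^ 2 else 0 := by
      intro j _
      rw [MeasureTheory.integral_const_mul,
        xi_prod_integral P ξ hξmeas hξindep hξdist i j]
      by_cases hij : i = j
      · rw [if_pos hij, if_pos hij, hij]; ring
      · rw [if_neg hij, if_neg hij]; ring
    rw [Finset.sum_congr rfl hterm, Finset.sum_ite_eq (Finset.range m) i fun _ => c i ^ 2,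
      if_pos hi]
  rw [Finset.sum_congr rfl this]

/-- Proposition 5.1: `𝒴̄_n^H = ∑_{i=1}^{i_n - 1} j_n^H(i) ξ_i → 0` in `L²`, where
`i_n = ⌊x_n⌋ + 1`.  Here `ξ i` stands for the Bernoulli variable `ξ_{i+1}` of the paper, so
`𝒴̄_n^H = ∑_{i ∈ range ⌊x_n⌋} j_n^H(i+1) ξ_{i+1}`. -/
theorem statement9 {Ω : Type} [MeasurableSpace Ω] (P : Measure Ω) [IsProbabilityMeasure P]
    (H σ : ℝ) (hH : H ∈ Set.Ioo (1 / 2 : ℝ) 1) (hσ : 0 < σ)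
    (ξ : ℕ → Ω → ℝ) (hξmeas : ∀ i, Measurable (ξ i))
    (hξindep : iIndepFun ξ P)
    (hξdist : ∀ i, P {ω | ξ i ω = 1} = 1 / 2 ∧ P {ω | ξ i ω = -1} = 1 / 2)
    (xn : ℕ → ℝ)
    (hxn : ∀ n : ℕ, 1 < n → xn n ∈ Set.Ioo (0 : ℝ) ((n : ℝ) - 1) ∧
      StrictAntiOn (gmap H n) (Set.Ioo 0 (xn n)) ∧
      StrictMonoOn (gmap H n) (Set.Ioo (xn n) ((n : ℝ) - 1))) :
    Tendsto (fun n => ∫ ω,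
        (∑ i ∈ Finset.range ⌊xn n⌋₊, jH σ H n (i + 1) * ξ i ω) ^ 2 ∂P)
      atTop (nhds 0) := by
  have key : ∀ n : ℕ, ∫ ω,
      (∑ i ∈ Finset.range ⌊xn n⌋₊, jH σ H n (i + 1) * ξ i ω) ^ 2 ∂P
      = ∑ i ∈ Finset.range ⌊xn n⌋₊, (jH σ H n (i + 1)) ^ 2 := fun n =>
    expectation_sq P ξ hξmeas hξindep hξdist (fun i => jH σ H n (i + 1)) _
  simp_rw [key]
  exact tendsto_sum_sq hH hσ xn hxn

end
end

section
/- For each integer k ≥ 1, the function h ↦ ρ_h(k) is increasing on the interval (1/2,3/4). As a consequence, lim_{h→1/2+} Σ_{k=1}^∞ ρ_h(k)² = 0. -/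
open MeasureTheory Filter Set ProbabilityTheory

noncomputable section

lemma combine_aux (A B C Q R : ℝ) (main : A + B - 2 * C ≤ 28 / 25 * (1 / Q))
    (hQ : 0 < Q) (hR : 0 < R) (h7 : R ≤ 2 * Q) : (A + B - 2 * C) / 2 ≤ 3 / R := by
  rw [div_le_div_iff₀ (by norm_num) hR]
  have h5 := mul_le_mul_of_nonneg_right main hR.le
  have h6 : 28 / 25 * (1 / Q) * R = 28 / 25 * (R / Q) := by ring
  have h7' : 28 / 25 * (R / Q) ≤ 28 / 25 * 2 := by
    apply mul_le_mul_of_nonneg_left _ (by norm_num)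
    rw [div_le_iff₀ hQ]; linarith
  rw [h6] at h5
  linarith

/-- Bernoulli-type lower bound for `p ≥ 1`. -/
lemma bern_ge {y t p : ℝ} (hy : 0 < y) (ht : -y ≤ t) (hp : 1 ≤ p) :
    y ^ p + p * t * y ^ (p - 1) ≤ (y + t) ^ p := by
  have hs : (-1 : ℝ) ≤ t / y := (le_div_iff₀ hy).2 (by linarith)
  have h := one_add_mul_self_le_rpow_one_add hs hp
  have hyp : (0 : ℝ) < y ^ p := Real.rpow_pos_of_pos hy p
  have key : y ^ p * (1 + p * (t / y)) ≤ y ^ p * (1 + t / y) ^ p :=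
    mul_le_mul_of_nonneg_left h hyp.le
  have h2 : y ^ p * (1 + t / y) ^ p = (y + t) ^ p := by
    rw [← Real.mul_rpow hy.le (by linarith)]
    congr 1
    field_simp
  have h3 : y ^ p * (1 + p * (t / y)) = y ^ p + p * t * y ^ (p - 1) := by
    rw [Real.rpow_sub_one hy.ne']
    field_simp
  linarith [h3 ▸ h2 ▸ key]

/-- Bernoulli-type upper bound for `0 ≤ p ≤ 1`. -/
lemma bern_le {y t p : ℝ} (hy : 0 < y) (ht : -y ≤ t) (hp0 : 0 ≤ p) (hp1 : p ≤ 1) :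
    (y + t) ^ p ≤ y ^ p + p * t * y ^ (p - 1) := by
  have hs : (-1 : ℝ) ≤ t / y := (le_div_iff₀ hy).2 (by linarith)
  have h := rpow_one_add_le_one_add_mul_self hs hp0 hp1
  have hyp : (0 : ℝ) < y ^ p := Real.rpow_pos_of_pos hy p
  have key : y ^ p * (1 + t / y) ^ p ≤ y ^ p * (1 + p * (t / y)) :=
    mul_le_mul_of_nonneg_left h hyp.le
  have h2 : y ^ p * (1 + t / y) ^ p = (y + t) ^ p := by
    rw [← Real.mul_rpow hy.le (by linarith)]
    congr 1
    field_simp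
  have h3 : y ^ p * (1 + p * (t / y)) = y ^ p + p * t * y ^ (p - 1) := by
    rw [Real.rpow_sub_one hy.ne']
    field_simp
  linarith [h3 ▸ h2 ▸ key]

/-- `x ↦ x^b - x^a` is strictly convex on `[1, ∞)` for `1 < a < b`. -/
lemma strictConvexOn_rpow_sub {a b : ℝ} (ha : 1 < a) (hab : a < b) :
    StrictConvexOn ℝ (Ici 1) (fun x : ℝ => x ^ b - x ^ a) := by
  apply strictConvexOn_of_deriv2_pos (convex_Ici 1)
  · intro x hx
    have hx0 : x ≠ 0 := by rintro rfl; simp at hx; linarith [hx]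
    exact ((Real.continuousAt_rpow_const x b (Or.inl hx0)).sub
      (Real.continuousAt_rpow_const x a (Or.inl hx0))).continuousWithinAt
  · intro x hx
    rw [interior_Ici] at hx
    have hx0 : (0 : ℝ) < x := lt_trans one_pos hx
    set f : ℝ → ℝ := fun x => x ^ b - x ^ a with hf
    have hd1 : ∀ y ∈ Ioi (0 : ℝ), deriv f y = b * y ^ (b - 1) - a * y ^ (a - 1) := by
      intro y hy
      exact ((Real.hasDerivAt_rpow_const (Or.inl (ne_of_gt hy))).sub
        (Real.hasDerivAt_rpow_const (Or.inl (ne_of_gt hy)))).deriv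
    have hev : deriv f =ᶠ[nhds x] fun y => b * y ^ (b - 1) - a * y ^ (a - 1) :=
      Filter.eventuallyEq_of_mem (Ioi_mem_nhds hx0) hd1
    have hit : (deriv^[2] f) x = deriv (deriv f) x := by
      simp [Function.iterate_succ_apply']
    rw [hit, hev.deriv_eq]
    have hd2 : deriv (fun y => b * y ^ (b - 1) - a * y ^ (a - 1)) x
        = b * ((b - 1) * x ^ (b - 1 - 1)) - a * ((a - 1) * x ^ (a - 1 - 1)) :=
      (((Real.hasDerivAt_rpow_const (Or.inl hx0.ne')).const_mul b).sub
        ((Real.hasDerivAt_rpow_const (Or.inl hx0.ne')).const_mul a)).deriv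
    rw [hd2]
    have h1 : x ^ (a - 1 - 1) ≤ x ^ (b - 1 - 1) :=
      Real.rpow_le_rpow_of_exponent_le hx.le (by linarith)
    have h2 : (0 : ℝ) < x ^ (a - 1 - 1) := Real.rpow_pos_of_pos hx0 _
    have h3 : a * (a - 1) < b * (b - 1) := by nlinarith
    nlinarith [mul_le_mul_of_nonneg_left h1 (by nlinarith : (0:ℝ) ≤ b * (b - 1))]

lemma second_diff_lt {a b c : ℝ} (ha : 1 < a) (hab : a < b) (hc : 2 ≤ c) :
    (c + 1) ^ a + (c - 1) ^ a - 2 * c ^ a < (c + 1) ^ b + (c - 1) ^ b - 2 * c ^ b := by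
  have S := strictConvexOn_rpow_sub ha hab
  have h1 : (c - 1 : ℝ) ∈ Ici (1 : ℝ) := by simp; linarith
  have h2 : (c + 1 : ℝ) ∈ Ici (1 : ℝ) := by simp; linarith
  have hne : (c - 1 : ℝ) ≠ c + 1 := by linarith
  have := S.2 h1 h2 hne (by norm_num : (0:ℝ) < 1/2) (by norm_num : (0:ℝ) < 1/2) (by norm_num)
  simp only [smul_eq_mul] at this
  have harg : (1 / 2 : ℝ) * (c - 1) + (1 / 2 : ℝ) * (c + 1) = c := by ring
  rw [harg] at this
  linarith

lemma rho_strictMonoOn {k : ℕ} (hk : 1 ≤ k) :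
    StrictMonoOn (fun h : ℝ => rho h k) (Set.Ioo (1 / 2 : ℝ) (3 / 4)) := by
  intro h1 hh1 h2 hh2 h12
  simp only [rho]
  rcases eq_or_lt_of_le hk with h | h
  · -- k = 1
    subst h
    have e1 : (2 : ℝ) * h1 ≠ 0 := by linarith [hh1.1]
    have e2 : (2 : ℝ) * h2 ≠ 0 := by linarith [hh2.1]
    have key : (2 : ℝ) ^ (2 * h1) < (2 : ℝ) ^ (2 * h2) :=
      (Real.rpow_lt_rpow_left_iff one_lt_two).mpr (by linarith)
    simp only [Nat.cast_one, sub_self, Real.zero_rpow e1, Real.zero_rpow e2, Real.one_rpow]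
    norm_num
    linarith
  · have hc : (2 : ℝ) ≤ (k : ℝ) := by exact_mod_cast h
    have := second_diff_lt (a := 2 * h1) (b := 2 * h2)
      (by linarith [hh1.1]) (by linarith) hc
    linarith

lemma rho_nonneg {h : ℝ} (hh : 1 / 2 ≤ h) {k : ℕ} (hk : 1 ≤ k) : 0 ≤ rho h k := by
  have hc : (1 : ℝ) ≤ (k : ℝ) := by exact_mod_cast hk
  have C := convexOn_rpow (p := 2 * h) (by linarith)
  have h1 : ((k : ℝ) - 1) ∈ Ici (0 : ℝ) := by simp; linarith
  have h2 : ((k : ℝ) + 1) ∈ Ici (0 : ℝ) := by simp; linarith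
  have := C.2 h1 h2 (by norm_num : (0:ℝ) ≤ 1/2) (by norm_num : (0:ℝ) ≤ 1/2) (by norm_num)
  simp only [smul_eq_mul] at this
  have harg : (1 / 2 : ℝ) * ((k : ℝ) - 1) + (1 / 2 : ℝ) * ((k : ℝ) + 1) = (k : ℝ) := by ring
  rw [harg] at this
  simp only [rho]
  linarith

lemma rho_aux {n : ℝ} (hn2 : 2 ≤ n) :
    ((n+1) ^ ((7:ℝ)/5) + (n-1) ^ ((7:ℝ)/5) - 2 * n ^ ((7:ℝ)/5)) / 2 ≤ 3 / n ^ ((3:ℝ)/5) := by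
  have A := bern_ge (y := n + 1) (t := -1) (p := (7:ℝ)/5)
    (by linarith) (by linarith) (by norm_num)
  rw [show n + 1 + -1 = n by ring] at A
  have B := bern_ge (y := n - 1) (t := 1) (p := (7:ℝ)/5)
    (by linarith) (by linarith) (by norm_num)
  rw [show n - 1 + 1 = n by ring] at B
  have C := bern_le (y := n - 1) (t := 2) (p := (7:ℝ)/5 - 1)
    (by linarith) (by linarith) (by norm_num) (by norm_num)
  rw [show n - 1 + 2 = n + 1 by ring] at C
  have key : (n+1) ^ ((7:ℝ)/5) + (n-1) ^ ((7:ℝ)/5) - 2 * n ^ ((7:ℝ)/5)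
      ≤ 2 * (7/5) * (7/5 - 1) * (n - 1) ^ ((7:ℝ)/5 - 1 - 1) := by nlinarith
  have hpos1 : (0:ℝ) < (n - 1) ^ ((3:ℝ)/5) := Real.rpow_pos_of_pos (by linarith) _
  have hpos2 : (0:ℝ) < n ^ ((3:ℝ)/5) := Real.rpow_pos_of_pos (by linarith) _
  have hneg : (n - 1) ^ ((7:ℝ)/5 - 1 - 1) = 1 / (n - 1) ^ ((3:ℝ)/5) := by
    rw [show (7:ℝ)/5 - 1 - 1 = -(3/5) by norm_num, Real.rpow_neg (by linarith), one_div]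
  have hcmp : n ^ ((3:ℝ)/5) ≤ 2 * (n - 1) ^ ((3:ℝ)/5) := by
    have h1 : n ≤ 2 * (n - 1) := by linarith
    have h2 : n ^ ((3:ℝ)/5) ≤ (2 * (n - 1)) ^ ((3:ℝ)/5) :=
      Real.rpow_le_rpow (by linarith) h1 (by norm_num)
    have h3 : (2 * (n - 1)) ^ ((3:ℝ)/5) = 2 ^ ((3:ℝ)/5) * (n - 1) ^ ((3:ℝ)/5) :=
      Real.mul_rpow (by norm_num) (by linarith)
    have h4 : (2:ℝ) ^ ((3:ℝ)/5) ≤ 2 := by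
      calc (2:ℝ) ^ ((3:ℝ)/5) ≤ 2 ^ (1:ℝ) :=
            Real.rpow_le_rpow_of_exponent_le one_le_two (by norm_num)
        _ = 2 := Real.rpow_one 2
    nlinarith
  have main : (n+1) ^ ((7:ℝ)/5) + (n-1) ^ ((7:ℝ)/5) - 2 * n ^ ((7:ℝ)/5)
      ≤ (28/25) * (1 / (n - 1) ^ ((3:ℝ)/5)) := by
    rw [hneg] at key; linarith
  exact combine_aux _ _ _ _ _ main hpos1 hpos2 hcmp

lemma rho_le_bound (k : ℕ) :
    rho (7 / 10) (k + 1) ≤ 3 / ((k : ℝ) + 1) ^ ((3 : ℝ) / 5) := by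
  have ha : (2 : ℝ) * (7 / 10) = 7 / 5 := by norm_num
  rcases Nat.eq_zero_or_pos k with rfl | hk
  · have h1 : (2 : ℝ) ^ ((7 : ℝ) / 5) ≤ 2 ^ ((2 : ℕ) : ℝ) :=
      Real.rpow_le_rpow_of_exponent_le one_le_two (by norm_num)
    rw [Real.rpow_natCast] at h1
    simp only [rho, ha]
    norm_num [Real.zero_rpow, Real.one_rpow]
    linarith
  · have hk1 : (1 : ℝ) ≤ (k : ℝ) := by exact_mod_cast hk
    have h := rho_aux (n := (k : ℝ) + 1) (by linarith)
    simp only [rho, ha]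
    push_cast
    convert h using 4 <;> ring

lemma rho_tendsto (n : ℕ) :
    Tendsto (fun h : ℝ => rho h (n + 1)) (nhds (1 / 2)) (nhds 0) := by
  have key : ∀ c : ℝ, 0 ≤ c → ContinuousAt (fun h : ℝ => c ^ (2 * h)) (1 / 2) := by
    intro c _
    exact ContinuousAt.rpow continuousAt_const
      (continuousAt_const.mul continuousAt_id) (by right; norm_num)
  have hC : ContinuousAt (fun h : ℝ => rho h (n + 1)) (1 / 2) := by
    simp only [rho]
    push_cast
    exact (((key ((n:ℝ) + 1 + 1) (by positivity)).add
        (key ((n:ℝ) + 1 - 1) (by linarith [Nat.cast_nonneg (α := ℝ) n]))).sub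
      (continuousAt_const.mul (key ((n:ℝ) + 1) (by positivity)))).div_const 2
  have hval : rho (1 / 2) (n + 1) = 0 := by
    simp only [rho, show (2:ℝ) * (1/2) = 1 by norm_num, Real.rpow_one]
    push_cast
    ring
  have h' : Tendsto (fun h : ℝ => rho h (n + 1)) (nhds (1 / 2))
      (nhds (rho (1 / 2) (n + 1))) := hC.tendsto
  rwa [hval] at h'

/-- Lemma A.3: for each `k ≥ 1` the map `h ↦ ρ_h(k)` is increasing on `(1/2, 3/4)`; as a
consequence `∑_{k≥1} ρ_h(k)² → 0` as `h → 1/2⁺`. -/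
theorem statement17 :
    (∀ k : ℕ, 1 ≤ k → StrictMonoOn (fun h : ℝ => rho h k) (Set.Ioo (1 / 2 : ℝ) (3 / 4))) ∧
    Tendsto (fun h : ℝ => ∑' k : ℕ, (rho h (k + 1)) ^ 2)
      (nhdsWithin (1 / 2) (Set.Ioo (1 / 2 : ℝ) (3 / 4))) (nhds 0) := by
  constructor
  · exact fun k hk => rho_strictMonoOn hk
  · have hsum : Summable (fun k : ℕ => 9 / ((k : ℝ) + 1) ^ ((6 : ℝ) / 5)) := by
      have h0 : Summable (fun n : ℕ => 1 / (n : ℝ) ^ ((6 : ℝ) / 5)) :=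
        Real.summable_one_div_nat_rpow.mpr (by norm_num)
      have h1 := (h0.comp_injective (add_left_injective 1)).mul_left 9
      apply h1.congr
      intro k
      simp only [Function.comp_apply]
      push_cast
      ring
    have hpt : ∀ k : ℕ, Tendsto (fun h : ℝ => (rho h (k + 1)) ^ 2)
        (nhdsWithin (1 / 2) (Set.Ioo (1 / 2 : ℝ) (3 / 4))) (nhds 0) := by
      intro k
      have := ((rho_tendsto k).mono_left
        (nhdsWithin_le_nhds (s := Set.Ioo (1/2 : ℝ) (3/4)))).pow 2
      simpa using this
    have hbd : ∀ᶠ h in nhdsWithin (1 / 2) (Set.Ioo (1 / 2 : ℝ) (3 / 4)),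
        ∀ k : ℕ, ‖(rho h (k + 1)) ^ 2‖ ≤ 9 / ((k : ℝ) + 1) ^ ((6 : ℝ) / 5) := by
      have hev2 : ∀ᶠ h in nhdsWithin (1 / 2) (Set.Ioo (1 / 2 : ℝ) (3 / 4)), h < 7 / 10 :=
        (eventually_lt_nhds (by norm_num : (1 / 2 : ℝ) < 7 / 10)).filter_mono nhdsWithin_le_nhds
      filter_upwards [self_mem_nhdsWithin, hev2] with h hmem hlt k
      have hmem7 : (7 / 10 : ℝ) ∈ Set.Ioo (1 / 2 : ℝ) (3 / 4 : ℝ) := by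
        constructor <;> norm_num
      have hle : rho h (k + 1) ≤ rho (7 / 10) (k + 1) :=
        (rho_strictMonoOn (Nat.le_add_left 1 k) hmem hmem7 hlt).le
      have hnn : 0 ≤ rho h (k + 1) := rho_nonneg hmem.1.le (Nat.le_add_left 1 k)
      have hb := rho_le_bound k
      rw [Real.norm_eq_abs, abs_of_nonneg (sq_nonneg _)]
      calc (rho h (k + 1)) ^ 2 ≤ (3 / ((k : ℝ) + 1) ^ ((3 : ℝ) / 5)) ^ 2 :=
            pow_le_pow_left₀ hnn (hle.trans hb) 2
        _ = 9 / ((k : ℝ) + 1) ^ ((6 : ℝ) / 5) := by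
            rw [div_pow]
            congr 1
            · norm_num
            · rw [← Real.rpow_natCast (((k : ℝ) + 1) ^ ((3 : ℝ) / 5)) 2,
                ← Real.rpow_mul (by positivity)]
              norm_num
    simpa using tendsto_tsum_of_dominated_convergence hsum hpt hbd


end
end

section
/- For every h ∈ (1/2,3/4) and every integer k ≥ 1, ρ_h(k) ≥ h·(2h−1)/(2·k^{2−2h}). Consequently Σ_{k=1}^∞ ρ_h(k)² ≥ (h²·(2h−1)²/4)·ζ(4−4h), where ζ is the Riemann zeta function, and therefore lim_{h→3/4−} Σ_{k=1}^∞ ρ_h(k)² = ∞. -/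
open MeasureTheory Filter Set ProbabilityTheory

noncomputable section

/-- Nonnegativity on `[0,1]` from value `0` at `0` and nonnegative derivative. -/
lemma nonneg_on_Icc' (F : ℝ → ℝ) (hF0 : F 0 = 0)
    (hc : ContinuousOn F (Set.Icc 0 1))
    (hd : ∀ x ∈ Set.Ioo (0:ℝ) 1, ∃ F', HasDerivAt F F' x ∧ 0 ≤ F') :
    ∀ x ∈ Set.Icc (0:ℝ) 1, 0 ≤ F x := by
  have hmono : MonotoneOn F (Set.Icc 0 1) := by
    apply monotoneOn_of_deriv_nonneg (convex_Icc 0 1) hc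
    · intro x hx
      rw [interior_Icc] at hx
      obtain ⟨F', hF', _⟩ := hd x hx
      exact hF'.differentiableAt.differentiableWithinAt
    · intro x hx
      rw [interior_Icc] at hx
      obtain ⟨F', hF', h0⟩ := hd x hx
      rw [hF'.deriv]; exact h0
  intro x hx
  calc (0:ℝ) = F 0 := hF0.symm
  _ ≤ F x := hmono (Set.left_mem_Icc.2 zero_le_one) hx hx.1

/-- AM–GM style: if `a*b ≤ 1` and `r ≤ 0`, then `a^r + b^r ≥ 2`. -/
lemma two_le_rpow_add {a b r : ℝ} (ha : 0 < a) (hb : 0 < b) (hab : a * b ≤ 1)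
    (hr : r ≤ 0) : 2 ≤ a ^ r + b ^ r := by
  have hu : (0:ℝ) < a ^ r := Real.rpow_pos_of_pos ha r
  have hv : (0:ℝ) < b ^ r := Real.rpow_pos_of_pos hb r
  have h3 : Real.sqrt (a ^ r) ^ 2 = a ^ r := Real.sq_sqrt hu.le
  have h4 : Real.sqrt (b ^ r) ^ 2 = b ^ r := Real.sq_sqrt hv.le
  have h5 : 2 * (Real.sqrt (a ^ r) * Real.sqrt (b ^ r)) ≤ a ^ r + b ^ r := by
    nlinarith [sq_nonneg (Real.sqrt (a ^ r) - Real.sqrt (b ^ r))]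
  have h6 : Real.sqrt (a ^ r) * Real.sqrt (b ^ r) = (a * b) ^ (r / 2) := by
    rw [← Real.sqrt_mul hu.le, ← Real.mul_rpow ha.le hb.le, Real.sqrt_eq_rpow,
      ← Real.rpow_mul (by positivity)]
    ring_nf
  have h7 : 1 ≤ (a * b) ^ (r / 2) :=
    Real.one_le_rpow_of_pos_of_le_one_of_nonpos (by positivity) hab (by linarith)
  rw [h6] at h5
  linarith

lemma lem1 {q : ℝ} (hq0 : 0 < q) (hq1 : q < 1) :
    ∀ x ∈ Set.Icc (0:ℝ) 1, 2 * q * x ≤ (1 + x) ^ q - (1 - x) ^ q := by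
  have hcont : Continuous fun y : ℝ => y ^ q := Real.continuous_rpow_const hq0.le
  have key := nonneg_on_Icc' (fun x => (1 + x) ^ q - (1 - x) ^ q - 2 * q * x)
    (by norm_num)
    (by
      apply Continuous.continuousOn
      exact ((hcont.comp (continuous_const.add continuous_id)).sub
        (hcont.comp (continuous_const.sub continuous_id))).sub
        (continuous_const.mul continuous_id))
    (by
      intro x hx
      obtain ⟨hx0, hx1⟩ := hx
      have hpa : (0:ℝ) < 1 + x := by linarith
      have hpb : (0:ℝ) < 1 - x := by linarith
      have dA : HasDerivAt (fun y : ℝ => (1 + y) ^ q) (1 * q * (1 + x) ^ (q - 1)) x :=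
        (HasDerivAt.const_add 1 (hasDerivAt_id x)).rpow_const (Or.inl hpa.ne')
      have dB : HasDerivAt (fun y : ℝ => (1 - y) ^ q) (-1 * q * (1 - x) ^ (q - 1)) x :=
        ((hasDerivAt_id x).const_sub 1).rpow_const (Or.inl hpb.ne')
      have dC : HasDerivAt (fun y : ℝ => 2 * q * y) (2 * q) x := by
        simpa using (hasDerivAt_id x).const_mul (2 * q)
      refine ⟨_, (dA.sub dB).sub dC, ?_⟩
      have h2 : 2 ≤ (1 + x) ^ (q - 1) + (1 - x) ^ (q - 1) :=
        two_le_rpow_add hpa hpb (by nlinarith) (by linarith)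
      nlinarith [Real.rpow_pos_of_pos hpa (q - 1), Real.rpow_pos_of_pos hpb (q - 1)])
  intro x hx
  have := key x hx
  linarith

lemma G_lower {p : ℝ} (hp1 : 1 < p) (hp2 : p < 2) :
    ∀ x ∈ Set.Icc (0:ℝ) 1, 2 + p * (p - 1) / 2 * x ^ 2 ≤ (1 + x) ^ p + (1 - x) ^ p := by
  have hcont : Continuous fun y : ℝ => y ^ p := Real.continuous_rpow_const (by linarith)
  have key := nonneg_on_Icc'
    (fun x => (1 + x) ^ p + (1 - x) ^ p - 2 - p * (p - 1) / 2 * x ^ 2)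
    (by norm_num)
    (by
      apply Continuous.continuousOn
      exact (((hcont.comp (continuous_const.add continuous_id)).add
        (hcont.comp (continuous_const.sub continuous_id))).sub continuous_const).sub
        (continuous_const.mul (continuous_pow 2)))
    (by
      intro x hx
      obtain ⟨hx0, hx1⟩ := hx
      have hpa : (0:ℝ) < 1 + x := by linarith
      have hpb : (0:ℝ) < 1 - x := by linarith
      have dA : HasDerivAt (fun y : ℝ => (1 + y) ^ p) (1 * p * (1 + x) ^ (p - 1)) x :=
        (HasDerivAt.const_add 1 (hasDerivAt_id x)).rpow_const (Or.inl hpa.ne')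
      have dB : HasDerivAt (fun y : ℝ => (1 - y) ^ p) (-1 * p * (1 - x) ^ (p - 1)) x :=
        ((hasDerivAt_id x).const_sub 1).rpow_const (Or.inl hpb.ne')
      have dC : HasDerivAt (fun y : ℝ => p * (p - 1) / 2 * y ^ 2)
          (p * (p - 1) / 2 * (2 * x ^ 1)) x := (hasDerivAt_pow 2 x).const_mul _
      refine ⟨_, ((dA.add dB).sub (hasDerivAt_const x 2)).sub dC, ?_⟩
      have hl1 := lem1 (q := p - 1) (by linarith) (by linarith) x ⟨hx0.le, hx1.le⟩
      have hp0 : (0:ℝ) < p := by linarith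
      have h2 := mul_le_mul_of_nonneg_left hl1 hp0.le
      nlinarith [mul_pos (mul_pos hp0 (show (0:ℝ) < p - 1 by linarith)) hx0])
  intro x hx
  have := key x hx
  linarith

lemma G_upper {p : ℝ} (hp1 : 1 < p) (hp2 : p < 2) :
    ∀ x ∈ Set.Icc (0:ℝ) 1, (1 + x) ^ p + (1 - x) ^ p ≤ 2 + p * x ^ 2 := by
  have hcont : Continuous fun y : ℝ => y ^ p := Real.continuous_rpow_const (by linarith)
  have key := nonneg_on_Icc'
    (fun x => 2 + p * x ^ 2 - (1 + x) ^ p - (1 - x) ^ p)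
    (by norm_num)
    (by
      apply Continuous.continuousOn
      exact ((continuous_const.add (continuous_const.mul (continuous_pow 2))).sub
        (hcont.comp (continuous_const.add continuous_id))).sub
        (hcont.comp (continuous_const.sub continuous_id)))
    (by
      intro x hx
      obtain ⟨hx0, hx1⟩ := hx
      have hpa : (0:ℝ) < 1 + x := by linarith
      have hpb : (0:ℝ) < 1 - x := by linarith
      have dA : HasDerivAt (fun y : ℝ => (1 + y) ^ p) (1 * p * (1 + x) ^ (p - 1)) x :=
        (HasDerivAt.const_add 1 (hasDerivAt_id x)).rpow_const (Or.inl hpa.ne')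
      have dB : HasDerivAt (fun y : ℝ => (1 - y) ^ p) (-1 * p * (1 - x) ^ (p - 1)) x :=
        ((hasDerivAt_id x).const_sub 1).rpow_const (Or.inl hpb.ne')
      have dC : HasDerivAt (fun y : ℝ => 2 + p * y ^ 2) (p * (2 * x ^ 1)) x :=
        ((hasDerivAt_pow 2 x).const_mul p).const_add 2
      refine ⟨_, (dC.sub dA).sub dB, ?_⟩
      have hA : (1 + x) ^ (p - 1) ≤ 1 + x := by
        calc (1 + x) ^ (p - 1) ≤ (1 + x) ^ (1:ℝ) :=
          Real.rpow_le_rpow_of_exponent_le (by linarith) (by linarith)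
        _ = 1 + x := Real.rpow_one _
      have hB : 1 - x ≤ (1 - x) ^ (p - 1) := by
        calc (1 - x) = (1 - x) ^ (1:ℝ) := (Real.rpow_one _).symm
        _ ≤ (1 - x) ^ (p - 1) :=
          Real.rpow_le_rpow_of_exponent_ge hpb (by linarith) (by linarith)
      nlinarith)
  intro x hx
  have := key x hx
  linarith

lemma rho_bounds {h : ℝ} (hl : 1 / 2 < h) (hr : h < 3 / 4) {k : ℕ} (hk : 1 ≤ k) :
    h * (2 * h - 1) / 2 * (k : ℝ) ^ (2 * h - 2) ≤ rho h k ∧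
      rho h k ≤ h * (k : ℝ) ^ (2 * h - 2) := by
  set p : ℝ := 2 * h with hp
  have hp1 : 1 < p := by rw [hp]; linarith
  have hp2 : p < 2 := by rw [hp]; linarith
  have hK1 : (1:ℝ) ≤ (k:ℝ) := by exact_mod_cast hk
  have hK0 : (0:ℝ) < (k:ℝ) := by linarith
  set x : ℝ := 1 / (k:ℝ) with hxdef
  have hxmem : x ∈ Set.Icc (0:ℝ) 1 := by
    constructor
    · positivity
    · rw [hxdef]; rw [div_le_one hK0]; linarith
  have hKp : (0:ℝ) < (k:ℝ) ^ p := Real.rpow_pos_of_pos hK0 p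
  have e1 : ((k:ℝ) + 1) ^ p = (k:ℝ) ^ p * (1 + x) ^ p := by
    rw [← Real.mul_rpow hK0.le (by linarith [hxmem.1] : (0:ℝ) ≤ 1 + x)]
    congr 1
    rw [hxdef]
    field_simp
  have e2 : ((k:ℝ) - 1) ^ p = (k:ℝ) ^ p * (1 - x) ^ p := by
    rw [← Real.mul_rpow hK0.le (by linarith [hxmem.2] : (0:ℝ) ≤ 1 - x)]
    congr 1
    rw [hxdef]
    field_simp
  have e3 : (k:ℝ) ^ (2 * h - 2) = (k:ℝ) ^ p * x ^ 2 := by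
    rw [show 2 * h - 2 = p - ((2:ℕ):ℝ) by rw [hp]; norm_num]
    rw [Real.rpow_sub hK0, Real.rpow_natCast, hxdef]
    field_simp
  have hrho : rho h k = ((k:ℝ) ^ p * ((1 + x) ^ p + (1 - x) ^ p) - 2 * (k:ℝ) ^ p) / 2 := by
    rw [rho, ← hp, e1, e2]; ring
  constructor
  · have hG := G_lower hp1 hp2 x hxmem
    have h5 := mul_le_mul_of_nonneg_left hG hKp.le
    rw [hrho, e3]
    rw [hp] at h5 ⊢
    nlinarith [h5]
  · have hG := G_upper hp1 hp2 x hxmem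
    have h5 := mul_le_mul_of_nonneg_left hG hKp.le
    rw [hrho, e3]
    rw [hp] at h5 ⊢
    nlinarith [h5]

lemma summAux {s : ℝ} (hs : s < -1) : Summable (fun n : ℕ => ((n:ℝ) + 1) ^ s) := by
  have h1 : Summable (fun n : ℕ => (n:ℝ) ^ s) := Real.summable_nat_rpow.mpr hs
  have h2 := (summable_nat_add_iff 1).mpr h1
  refine h2.congr fun n => ?_
  push_cast
  ring_nf

lemma partA {h : ℝ} (hl : 1 / 2 < h) (hr : h < 3 / 4) :
    ∀ k : ℕ, 1 ≤ k → h * (2 * h - 1) / (2 * (k : ℝ) ^ (2 - 2 * h)) ≤ rho h k := by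
  intro k hk
  have hK0 : (0:ℝ) < (k:ℝ) := by exact_mod_cast hk
  have hb : (0:ℝ) < (k:ℝ) ^ (2 * h - 2) := Real.rpow_pos_of_pos hK0 _
  have e : (k:ℝ) ^ (2 - 2 * h) = ((k:ℝ) ^ (2 * h - 2))⁻¹ := by
    rw [show (2 - 2 * h) = -(2 * h - 2) by ring, Real.rpow_neg hK0.le]
  have hlow := (rho_bounds hl hr hk).1
  rw [e, div_eq_mul_inv, mul_inv, inv_inv]
  nlinarith [hlow]

lemma partB {h : ℝ} (hl : 1 / 2 < h) (hr : h < 3 / 4) :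
    (h ^ 2 * (2 * h - 1) ^ 2 / 4) * (∑' n : ℕ, ((n : ℝ) + 1) ^ (-(4 - 4 * h))) ≤
      ∑' k : ℕ, (rho h (k + 1)) ^ 2 := by
  have hexp : -(4 - 4 * h) < -1 := by linarith
  have hsum1 : Summable (fun n : ℕ => ((n:ℝ) + 1) ^ (-(4 - 4 * h))) := summAux hexp
  have hcoef : (0:ℝ) < h * (2 * h - 1) / 2 := by nlinarith
  -- per-index facts
  have keyfacts : ∀ k : ℕ,
      (h ^ 2 * (2 * h - 1) ^ 2 / 4) * ((k:ℝ) + 1) ^ (-(4 - 4 * h)) ≤ (rho h (k + 1)) ^ 2 ∧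
      (rho h (k + 1)) ^ 2 ≤ h ^ 2 * ((k:ℝ) + 1) ^ (-(4 - 4 * h)) := by
    intro k
    have hk1 : 1 ≤ k + 1 := Nat.le_add_left 1 k
    have hcast : ((k + 1 : ℕ) : ℝ) = (k:ℝ) + 1 := by push_cast; ring
    have hKpos : (0:ℝ) < (k:ℝ) + 1 := by positivity
    have hbpos : (0:ℝ) < ((k:ℝ) + 1) ^ (2 * h - 2) := Real.rpow_pos_of_pos hKpos _
    have hbd := rho_bounds hl hr hk1
    rw [hcast] at hbd
    obtain ⟨hlow, hup⟩ := hbd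
    have hL0 : (0:ℝ) ≤ h * (2 * h - 1) / 2 * ((k:ℝ) + 1) ^ (2 * h - 2) :=
      le_of_lt (mul_pos hcoef hbpos)
    have esq : (((k:ℝ) + 1) ^ (2 * h - 2)) ^ 2 = ((k:ℝ) + 1) ^ (-(4 - 4 * h)) := by
      rw [← Real.rpow_natCast (((k:ℝ) + 1) ^ (2 * h - 2)) 2,
        ← Real.rpow_mul hKpos.le]
      congr 1
      push_cast
      ring
    constructor
    · have h1 : (h * (2 * h - 1) / 2 * ((k:ℝ) + 1) ^ (2 * h - 2)) ^ 2 ≤ (rho h (k + 1)) ^ 2 :=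
        pow_le_pow_left₀ hL0 hlow 2
      calc (h ^ 2 * (2 * h - 1) ^ 2 / 4) * ((k:ℝ) + 1) ^ (-(4 - 4 * h))
          = (h * (2 * h - 1) / 2 * ((k:ℝ) + 1) ^ (2 * h - 2)) ^ 2 := by rw [← esq]; ring
        _ ≤ (rho h (k + 1)) ^ 2 := h1
    · have hr0 : (0:ℝ) ≤ rho h (k + 1) := le_trans hL0 hlow
      have h2 : (rho h (k + 1)) ^ 2 ≤ (h * ((k:ℝ) + 1) ^ (2 * h - 2)) ^ 2 :=
        pow_le_pow_left₀ hr0 hup 2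
      calc (rho h (k + 1)) ^ 2 ≤ (h * ((k:ℝ) + 1) ^ (2 * h - 2)) ^ 2 := h2
        _ = h ^ 2 * ((k:ℝ) + 1) ^ (-(4 - 4 * h)) := by rw [← esq]; ring
  have hsumrho : Summable (fun k : ℕ => (rho h (k + 1)) ^ 2) :=
    Summable.of_nonneg_of_le (fun k => sq_nonneg _) (fun k => (keyfacts k).2)
      (hsum1.mul_left (h ^ 2))
  rw [← tsum_mul_left]
  exact Summable.tsum_le_tsum (fun k => (keyfacts k).1) (hsum1.mul_left _) hsumrho

/-- Lemma A.4: for `h ∈ (1/2,3/4)` and `k ≥ 1`, `ρ_h(k) ≥ h(2h-1)/(2 k^{2-2h})`; consequently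
`∑_{k≥1} ρ_h(k)² ≥ (h²(2h-1)²/4) ζ(4-4h)` (with `ζ(s) = ∑_{n≥1} n^{-s}`), and therefore
`∑_{k≥1} ρ_h(k)² → ∞` as `h → 3/4⁻`. -/
theorem statement18 :
    (∀ h : ℝ, h ∈ Set.Ioo (1 / 2 : ℝ) (3 / 4) →
      (∀ k : ℕ, 1 ≤ k → h * (2 * h - 1) / (2 * (k : ℝ) ^ (2 - 2 * h)) ≤ rho h k) ∧
      (h ^ 2 * (2 * h - 1) ^ 2 / 4) * (∑' n : ℕ, ((n : ℝ) + 1) ^ (-(4 - 4 * h))) ≤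
        ∑' k : ℕ, (rho h (k + 1)) ^ 2) ∧
    Tendsto (fun h : ℝ => ∑' k : ℕ, (rho h (k + 1)) ^ 2)
      (nhdsWithin (3 / 4) (Set.Ioo (1 / 2 : ℝ) (3 / 4))) atTop := by
  refine ⟨fun h hh => ⟨partA hh.1 hh.2, partB hh.1 hh.2⟩, ?_⟩
  have hZ : Tendsto (fun h : ℝ => ∑' n : ℕ, ((n:ℝ) + 1) ^ (-(4 - 4 * h)))
      (nhdsWithin (3 / 4) (Set.Ioo (1 / 2 : ℝ) (3 / 4))) atTop := by
    rw [tendsto_atTop]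
    intro M
    obtain ⟨N, hN⟩ :=
      (tendsto_atTop.1 Real.tendsto_sum_range_one_div_nat_succ_atTop (M + 1)).exists
    have hPc : Continuous (fun h : ℝ => ∑ n ∈ Finset.range N, ((n:ℝ) + 1) ^ (-(4 - 4 * h))) := by
      apply continuous_finset_sum
      intro n _
      have hb : (0:ℝ) < (n:ℝ) + 1 := by positivity
      have heq : (fun h : ℝ => ((n:ℝ) + 1) ^ (-(4 - 4 * h))) =
          fun h : ℝ => Real.exp (Real.log ((n:ℝ) + 1) * (-(4 - 4 * h))) := by
        funext h; rw [Real.rpow_def_of_pos hb]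
      rw [heq]
      exact Real.continuous_exp.comp (continuous_const.mul (by continuity))
    have hval : (∑ n ∈ Finset.range N, ((n:ℝ) + 1) ^ (-(4 - 4 * (3/4:ℝ)))) =
        ∑ i ∈ Finset.range N, (1 / ((i:ℝ) + 1)) := by
      apply Finset.sum_congr rfl
      intro n _
      rw [show (-(4 - 4 * (3/4:ℝ))) = (-1 : ℝ) by norm_num, Real.rpow_neg_one]
      rw [one_div]
    have hlt : M < ∑ n ∈ Finset.range N, ((n:ℝ) + 1) ^ (-(4 - 4 * (3/4:ℝ))) := by
      rw [hval]
      calc M < M + 1 := by linarith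
      _ ≤ _ := by push_cast at hN ⊢; convert hN using 2
    have hev1 : ∀ᶠ h in nhds (3/4 : ℝ),
        M ≤ ∑ n ∈ Finset.range N, ((n:ℝ) + 1) ^ (-(4 - 4 * h)) :=
      (hPc.tendsto (3/4 : ℝ)).eventually (eventually_ge_nhds hlt)
    filter_upwards [hev1.filter_mono nhdsWithin_le_nhds, self_mem_nhdsWithin] with h hMh hh
    have hsum : Summable (fun n : ℕ => ((n:ℝ) + 1) ^ (-(4 - 4 * h))) :=
      summAux (by linarith [hh.2])
    calc M ≤ ∑ n ∈ Finset.range N, ((n:ℝ) + 1) ^ (-(4 - 4 * h)) := hMh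
    _ ≤ ∑' n : ℕ, ((n:ℝ) + 1) ^ (-(4 - 4 * h)) :=
      Summable.sum_le_tsum (Finset.range N) (fun i _ => Real.rpow_nonneg (by positivity) _) hsum
  have hcCont : Continuous (fun h : ℝ => h ^ 2 * (2 * h - 1) ^ 2 / 4) := by continuity
  have hc : Tendsto (fun h : ℝ => h ^ 2 * (2 * h - 1) ^ 2 / 4)
      (nhdsWithin (3 / 4) (Set.Ioo (1 / 2 : ℝ) (3 / 4)))
      (nhds ((3/4:ℝ) ^ 2 * (2 * (3/4:ℝ) - 1) ^ 2 / 4)) :=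
    (hcCont.tendsto _).mono_left nhdsWithin_le_nhds
  have hpos : (0:ℝ) < (3/4:ℝ) ^ 2 * (2 * (3/4:ℝ) - 1) ^ 2 / 4 := by norm_num
  have hmul := Filter.Tendsto.pos_mul_atTop hpos hc hZ
  apply tendsto_atTop_mono' _ ?_ hmul
  filter_upwards [self_mem_nhdsWithin] with h hh
  exact partB hh.1 hh.2

end
end
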